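/- arXiv:2009.05125 — 7 statements merged into one kernel-verified Lean document; each statement's English description precedes it below -/
import Mathlib

section
/- For every natural number m and every complex number x, the series Σ_{n≥0} Surj(n,m)·x^n/n! converges absolutely and its sum equals (e^x − 1)^m. -/
/-- `Surj n m` is the number of surjective functions from `Fin n` to `Fin m`. -/
noncomputable def Surj (n m : ℕ) : ℕ :=
  Nat.card {f : Fin n → Fin m // Function.Surjective f}

open Finset in
lemma surj_formula (n m : ℕ) :
    (Surj n m : ℤ) = ∑ t : Finset (Fin m), (-1 : ℤ) ^ #t * ((m - #t : ℕ) : ℤ) ^ n := by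
  classical
  have key := Finset.inclusion_exclusion_card_inf_compl (Finset.univ : Finset (Fin m))
    (fun i => Finset.univ.filter (fun f : Fin n → Fin m => ∀ x, f x ≠ i))
  have h1 : (Finset.univ.inf fun i : Fin m =>
      (Finset.univ.filter (fun f : Fin n → Fin m => ∀ x, f x ≠ i))ᶜ)
      = Finset.univ.filter (fun f : Fin n → Fin m => Function.Surjective f) := by
    ext f
    simp [Finset.mem_inf, Function.Surjective, eq_comm]
  have h2 : ∀ t : Finset (Fin m),
      (t.inf fun i => Finset.univ.filter (fun f : Fin n → Fin m => ∀ x, f x ≠ i))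
      = Fintype.piFinset (fun _ : Fin n => tᶜ) := by
    intro t
    ext f
    simp only [Finset.mem_inf, Finset.mem_filter, Finset.mem_univ, true_and,
      Fintype.mem_piFinset, Finset.mem_compl]
    constructor
    · intro h x hx
      exact h (f x) hx x rfl
    · rintro h i hi x rfl
      exact h x hi
  have h3 : Surj n m = #(Finset.univ.filter
      (fun f : Fin n → Fin m => Function.Surjective f)) := by
    rw [Surj, Nat.card_eq_fintype_card, Fintype.card_subtype]
  rw [h1] at key
  rw [h3, key, Finset.powerset_univ]
  refine Finset.sum_congr rfl fun t _ => ?_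
  rw [h2 t, Fintype.card_piFinset]
  simp [Finset.card_compl]

lemma surj_le (n m : ℕ) : Surj n m ≤ m ^ n := by
  rw [Surj, Nat.card_eq_fintype_card]
  calc Fintype.card {f : Fin n → Fin m // Function.Surjective f}
      ≤ Fintype.card (Fin n → Fin m) := Fintype.card_subtype_le _
    _ = m ^ n := by simp

open Finset in
/-- For every natural number `m` and every complex number `x`, the series
`Σ_{n≥0} Surj(n,m)·x^n/n!` converges absolutely and its sum equals `(e^x − 1)^m`. -/
theorem stmt0 (m : ℕ) (x : ℂ) :
    Summable (fun n : ℕ => ‖(Surj n m : ℂ) * x ^ n / (Nat.factorial n : ℂ)‖) ∧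
    ∑' n : ℕ, (Surj n m : ℂ) * x ^ n / (Nat.factorial n : ℂ) = (Complex.exp x - 1) ^ m := by
  classical
  constructor
  · refine Summable.of_nonneg_of_le (fun n => norm_nonneg _)
      (fun n => ?_) (Real.summable_pow_div_factorial (m * ‖x‖))
    rw [norm_div, norm_mul, Complex.norm_natCast, Complex.norm_natCast, norm_pow, mul_pow]
    have hb : (Surj n m : ℝ) ≤ (m : ℝ) ^ n := by
      calc (Surj n m : ℝ) ≤ ((m ^ n : ℕ) : ℝ) := by exact_mod_cast surj_le n m
        _ = (m : ℝ) ^ n := by push_cast; ring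
    gcongr
  · set F : Finset (Fin m) → ℕ → ℂ :=
      fun t n => (-1 : ℂ) ^ #t * (((m - #t : ℕ) : ℂ) * x) ^ n / (Nat.factorial n : ℂ) with hF
    have hsumF : ∀ t : Finset (Fin m), Summable (F t) := by
      intro t
      simpa [hF, mul_div_assoc] using
        ((NormedSpace.expSeries_div_summable (((m - #t : ℕ) : ℂ) * x)).mul_left
          ((-1 : ℂ) ^ #t))
    have hpt : ∀ n : ℕ, (Surj n m : ℂ) * x ^ n / (Nat.factorial n : ℂ)
        = ∑ t : Finset (Fin m), F t n := by
      intro n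
      have hcast : (Surj n m : ℂ)
          = ∑ t : Finset (Fin m), (-1 : ℂ) ^ #t * ((m - #t : ℕ) : ℂ) ^ n := by
        exact_mod_cast congrArg (fun z : ℤ => (z : ℂ)) (surj_formula n m)
      rw [hcast, Finset.sum_mul, Finset.sum_div]
      refine Finset.sum_congr rfl fun t _ => ?_
      simp only [hF, mul_pow]
      ring
    have hexp : ∀ y : ℂ, ∑' n : ℕ, y ^ n / (Nat.factorial n : ℂ) = Complex.exp y := by
      intro y
      rw [Complex.exp_eq_exp_ℂ, NormedSpace.exp_eq_tsum_div]
    calc ∑' n : ℕ, (Surj n m : ℂ) * x ^ n / (Nat.factorial n : ℂ)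
        = ∑' n : ℕ, ∑ t : Finset (Fin m), F t n := tsum_congr hpt
      _ = ∑ t : Finset (Fin m), ∑' n : ℕ, F t n := Summable.tsum_finsetSum (fun t _ => hsumF t)
      _ = ∑ t : Finset (Fin m), (-1 : ℂ) ^ #t * Complex.exp x ^ (m - #t) := by
          refine Finset.sum_congr rfl fun t _ => ?_
          have : ∑' n : ℕ, F t n
              = (-1 : ℂ) ^ #t * ∑' n : ℕ, (((m - #t : ℕ) : ℂ) * x) ^ n / (Nat.factorial n : ℂ) := by
            simp only [hF, mul_div_assoc]
            exact tsum_mul_left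
          rw [this, hexp, ← Complex.exp_nat_mul]
      _ = ((-1 : ℂ) + Complex.exp x) ^ m := by
          have h := Fintype.sum_pow_mul_eq_add_pow (Fin m) (-1 : ℂ) (Complex.exp x)
          rw [Fintype.card_fin] at h
          exact h
      _ = (Complex.exp x - 1) ^ m := by rw [neg_add_eq_sub]
end

section
/- Let a : ℕ × ℕ → ℂ and let R > 0 be a real number. Suppose that for every n the power series T_n(z) = Σ_{N≥0} a(n,N)·z^N converges absolutely for every complex z with |z| < R, and that for every real r₁ with 0 < r₁ < R one has Σ_{n≥0} sup_{|z| = r₁} |T_n(z)| < ∞. Then for every real r with 0 < r < R, Σ_{n,N≥0} |a(n,N)|·r^N < ∞. -/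
open Metric Complex

/-- Let `a : ℕ × ℕ → ℂ` and `R > 0`. Suppose that for every `n` the power series
`T_n(z) = Σ_N a(n,N)·z^N` converges absolutely for `|z| < R`, and that for every
`0 < r₁ < R` one has `Σ_n sup_{|z| = r₁} |T_n(z)| < ∞`. Then for every `0 < r < R`,
`Σ_{n,N} |a(n,N)|·r^N < ∞`. -/
theorem stmt2 (a : ℕ × ℕ → ℂ) (R : ℝ) (hR : 0 < R)
    (hconv : ∀ n : ℕ, ∀ z : ℂ, ‖z‖ < R → Summable (fun N : ℕ => ‖a (n, N) * z ^ N‖))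
    (hsup : ∀ r₁ : ℝ, 0 < r₁ → r₁ < R →
      Summable (fun n : ℕ =>
        ⨆ z : Metric.sphere (0 : ℂ) r₁, ‖∑' N : ℕ, a (n, N) * (z : ℂ) ^ N‖)) :
    ∀ r : ℝ, 0 < r → r < R → Summable (fun p : ℕ × ℕ => ‖a p‖ * r ^ p.2) := by
  intro r hr hrR
  set r₁ : ℝ := (r + R) / 2 with hr₁def
  have hr₁pos : 0 < r₁ := by positivity
  have hrr₁ : r < r₁ := by simp only [hr₁def]; linarith
  have hr₁R : r₁ < R := by simp only [hr₁def]; linarith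
  set r₂ : ℝ := (r₁ + R) / 2 with hr₂def
  have hr₁r₂ : r₁ < r₂ := by simp only [hr₂def]; linarith
  have hr₂R : r₂ < R := by simp only [hr₂def]; linarith
  have hr₂pos : 0 < r₂ := lt_trans hr₁pos hr₁r₂
  -- the formal power series
  set p : ℕ → FormalMultilinearSeries ℂ ℂ ℂ :=
    fun n N => ContinuousMultilinearMap.mkPiRing ℂ (Fin N) (a (n, N)) with hpdef
  have hpnorm : ∀ n N, ‖p n N‖ = ‖a (n, N)‖ := fun n N => by
    simp [hpdef]
  have hrad : ∀ n, (r₂.toNNReal : ENNReal) ≤ (p n).radius := by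
    intro n
    apply FormalMultilinearSeries.le_radius_of_summable
    have := hconv n (r₂ : ℂ) (by rwa [Complex.norm_real, Real.norm_of_nonneg hr₂pos.le])
    refine this.congr fun N => ?_
    simp [hpnorm, Real.coe_toNNReal _ hr₂pos.le, _root_.abs_of_nonneg hr₂pos.le]
  have hradpos : ∀ n, 0 < (p n).radius := fun n =>
    lt_of_lt_of_le (by simpa using hr₂pos) (hrad n)
  set f : ℕ → ℂ → ℂ := fun n z => ∑' N : ℕ, a (n, N) * z ^ N with hfdef
  have hps : ∀ n, HasFPowerSeriesOnBall (f n) (p n) 0 (p n).radius := by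
    intro n
    refine ((p n).hasFPowerSeriesOnBall (hradpos n)).congr ?_
    intro z hz
    simp only [EMetric.mem_ball, edist_zero_right] at hz
    simp only [hfdef, FormalMultilinearSeries.sum, hpdef]
    congr 1
    ext N
    simp [ContinuousMultilinearMap.mkPiRing_apply, mul_comm]
  -- differentiability on closed ball r₁
  have hdiff : ∀ n, DifferentiableOn ℂ (f n) (closedBall (0 : ℂ) r₁) := by
    intro n
    refine ((hps n).analyticOnNhd.differentiableOn).mono ?_
    intro z hz
    simp only [EMetric.mem_ball, Metric.mem_closedBall, dist_zero_right] at hz ⊢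
    calc edist z 0 = (‖z‖.toNNReal : ENNReal) := by
          simp [edist_zero_right, ← ofReal_norm]
          exact ofReal_norm z
      _ ≤ (r₁.toNNReal : ENNReal) := by
          simp only [ENNReal.coe_le_coe]
          exact Real.toNNReal_mono hz
      _ < (r₂.toNNReal : ENNReal) := by
          simp only [ENNReal.coe_lt_coe]
          exact (Real.toNNReal_lt_toNNReal_iff hr₂pos).2 hr₁r₂
      _ ≤ (p n).radius := hrad n
  set M : ℕ → ℝ := fun n => ⨆ z : sphere (0:ℂ) r₁, ‖f n z‖ with hMdef
  have hMsum : Summable M := hsup r₁ hr₁pos hr₁R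
  have hMnonneg : ∀ n, 0 ≤ M n := fun n => Real.iSup_nonneg fun z => norm_nonneg _
  have hcont : ∀ n, ContinuousOn (f n) (closedBall (0:ℂ) r₁) :=
    fun n => (hdiff n).continuousOn
  have hbdd : ∀ n, BddAbove (Set.range fun z : sphere (0:ℂ) r₁ => ‖f n z‖) := by
    intro n
    have h := ((isCompact_sphere (0:ℂ) r₁).image_of_continuousOn
      (((hcont n).mono sphere_subset_closedBall).norm)).bddAbove
    rwa [Set.image_eq_range] at h
  have hle : ∀ n θ, ‖f n (circleMap 0 r₁ θ)‖ ≤ M n := by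
    intro n θ
    have hmem : circleMap 0 r₁ θ ∈ sphere (0:ℂ) r₁ := circleMap_mem_sphere _ hr₁pos.le _
    exact le_ciSup (hbdd n) ⟨_, hmem⟩
  have hr₁coe : (r₁.toNNReal : ℝ) = r₁ := Real.coe_toNNReal _ hr₁pos.le
  have hcauchy : ∀ n, p n = cauchyPowerSeries (f n) 0 r₁ := by
    intro n
    have h2 : HasFPowerSeriesOnBall (f n) (cauchyPowerSeries (f n) 0 r₁.toNNReal) 0
        r₁.toNNReal := by
      refine DifferentiableOn.hasFPowerSeriesOnBall ?_ (by simpa using hr₁pos)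
      rw [hr₁coe]; exact hdiff n
    rw [hr₁coe] at h2
    exact (hps n).hasFPowerSeriesAt.eq_formalMultilinearSeries h2.hasFPowerSeriesAt
  have hfcont : ∀ n, Continuous fun θ : ℝ => ‖f n (circleMap 0 r₁ θ)‖ := by
    intro n
    exact ((hcont n).comp_continuous (continuous_circleMap 0 r₁)
      (fun θ => sphere_subset_closedBall (circleMap_mem_sphere _ hr₁pos.le θ))).norm
  have hintle : ∀ n, (2 * Real.pi)⁻¹ *
      (∫ θ : ℝ in (0)..2 * Real.pi, ‖f n (circleMap 0 r₁ θ)‖) ≤ M n := by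
    intro n
    have h1 : (∫ θ : ℝ in (0)..2 * Real.pi, ‖f n (circleMap 0 r₁ θ)‖)
        ≤ ∫ _ : ℝ in (0)..2 * Real.pi, M n := by
      refine intervalIntegral.integral_mono_on Real.two_pi_pos.le
        ((hfcont n).intervalIntegrable _ _) (intervalIntegrable_const) ?_
      exact fun θ _ => hle n θ
    rw [intervalIntegral.integral_const, smul_eq_mul, sub_zero] at h1
    calc (2 * Real.pi)⁻¹ * (∫ θ : ℝ in (0)..2 * Real.pi, ‖f n (circleMap 0 r₁ θ)‖)
        ≤ (2 * Real.pi)⁻¹ * (2 * Real.pi * M n) := by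
          exact mul_le_mul_of_nonneg_left h1 (by positivity)
      _ = M n := by field_simp
  have hbound : ∀ n N, ‖a (n, N)‖ ≤ M n * r₁⁻¹ ^ N := by
    intro n N
    have := norm_cauchyPowerSeries_le (f n) 0 r₁ N
    rw [← hcauchy n, hpnorm n N, _root_.abs_of_nonneg hr₁pos.le] at this
    exact this.trans (mul_le_mul_of_nonneg_right (hintle n)
      (pow_nonneg (inv_nonneg.2 hr₁pos.le) N))
  have hkey : ∀ q : ℕ × ℕ, ‖a q‖ * r ^ q.2 ≤ M q.1 * (r / r₁) ^ q.2 := by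
    intro ⟨n, N⟩
    have : ‖a (n, N)‖ * r ^ N ≤ (M n * r₁⁻¹ ^ N) * r ^ N :=
      mul_le_mul_of_nonneg_right (hbound n N) (pow_nonneg hr.le N)
    calc ‖a (n, N)‖ * r ^ N ≤ (M n * r₁⁻¹ ^ N) * r ^ N := this
      _ = M n * (r / r₁) ^ N := by rw [div_pow, inv_pow, div_eq_mul_inv]; ac_rfl
  have hgeo : Summable fun N : ℕ => (r / r₁) ^ N :=
    summable_geometric_of_lt_one (div_nonneg hr.le hr₁pos.le)
      ((div_lt_one hr₁pos).2 hrr₁)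
  have hprod : Summable fun q : ℕ × ℕ => M q.1 * (r / r₁) ^ q.2 :=
    hMsum.mul_of_nonneg hgeo hMnonneg
      (fun N => pow_nonneg (div_nonneg hr.le hr₁pos.le) N)
  exact Summable.of_nonneg_of_le
    (fun q => mul_nonneg (norm_nonneg _) (pow_nonneg hr.le _)) hkey hprod
end

section
/- In the complex vector space of functions from the open unit disk {z ∈ ℂ : |z| < 1} to ℂ, the family (ℓ_r)_{r≥1} is linearly independent over ℂ, and the family consisting of the constant function 1 together with (exp ∘ ℓ_r)_{r≥1} is linearly independent over ℂ. -/
open Filter Topology Complex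

/-- `ℓ_k(z)`: for `k = 1`, `ℓ_1(z) = γ·z − Σ_{n≥2} ζ(n)·(−z)^n/n`; for `k ≥ 2`,
`ℓ_k(z) = −Σ_{n≥1} ζ(kn)·(−z^k)^n/n` (both series converge absolutely for `|z| < 1`). -/
noncomputable def ell (k : ℕ) (z : ℂ) : ℂ :=
  if k = 1 then
    (Real.eulerMascheroniConstant : ℂ) * z
      - ∑' n : ℕ, riemannZeta ((n : ℂ) + 2) * (-z) ^ (n + 2) / ((n : ℂ) + 2)
  else
    - ∑' n : ℕ, riemannZeta ((k : ℂ) * ((n : ℂ) + 1)) * (-z ^ k) ^ (n + 1) / ((n : ℂ) + 1)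

lemma zeta_nat_norm_le (m : ℕ) (hm : 2 ≤ m) : ‖riemannZeta m‖ ≤ 2 := by
  have hre : 1 < Complex.re (m : ℂ) := by
    rw [Complex.natCast_re]; exact_mod_cast hm.trans_lt' one_lt_two
  rw [zeta_eq_tsum_one_div_nat_add_one_cpow hre]
  have hnn : ∀ n : ℕ, ‖1 / ((n : ℂ) + 1) ^ (m : ℂ)‖ ≤ 1 / ((n : ℝ) + 1) ^ 2 := by
    intro n
    have hc : ((n : ℂ) + 1) = ((n + 1 : ℕ) : ℂ) := by push_cast; ring
    rw [Complex.cpow_natCast, norm_div, norm_one, norm_pow, hc, Complex.norm_natCast]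
    have h1 : (1 : ℝ) ≤ ((n + 1 : ℕ) : ℝ) := by
      exact_mod_cast Nat.one_le_iff_ne_zero.2 (Nat.succ_ne_zero n)
    apply div_le_div_of_nonneg_left one_pos.le (by positivity)
    calc ((n:ℝ)+1)^2 = ((n+1:ℕ):ℝ)^2 := by push_cast; ring
      _ ≤ ((n+1:ℕ):ℝ)^m := pow_le_pow_right₀ h1 hm
  have hsum2 : Summable (fun n : ℕ => 1 / ((n : ℝ) + 1) ^ 2) := by
    have := (summable_nat_add_iff 1).2 (Real.summable_one_div_nat_pow.2 one_lt_two)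
    refine this.congr fun n => by push_cast; ring
  have hsumf : Summable (fun n : ℕ => ‖1 / ((n : ℂ) + 1) ^ (m : ℂ)‖) :=
    hsum2.of_nonneg_of_le (fun n => norm_nonneg _) hnn
  calc ‖∑' n : ℕ, 1 / ((n : ℂ) + 1) ^ (m : ℂ)‖ ≤ ∑' n : ℕ, ‖1 / ((n : ℂ) + 1) ^ (m : ℂ)‖ :=
        norm_tsum_le_tsum_norm hsumf
    _ ≤ ∑' n : ℕ, 1 / ((n : ℝ) + 1) ^ 2 := Summable.tsum_le_tsum hnn hsumf hsum2
    _ ≤ 2 := by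
        have h0 : (∑' n : ℕ, 1 / ((n : ℝ)) ^ 2) = Real.pi ^ 2 / 6 := hasSum_zeta_two.tsum_eq
        rw [Summable.tsum_eq_zero_add (by exact_mod_cast Real.summable_one_div_nat_pow.2 one_lt_two)] at h0
        simp only [Nat.cast_zero] at h0
        have h3 : (∑' n : ℕ, 1 / ((n : ℝ) + 1) ^ 2) = ∑' n : ℕ, 1 / ((n + 1 : ℕ) : ℝ) ^ 2 := by
          refine tsum_congr fun n => by push_cast; ring
        rw [h3]
        have hpi : Real.pi < 3.15 := Real.pi_lt_d2
        have hpi0 : 0 < Real.pi := Real.pi_pos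
        have h4 : (∑' n : ℕ, 1 / ((n + 1 : ℕ) : ℝ) ^ 2) = Real.pi ^ 2 / 6 - 1/(0:ℝ)^2 := by
          push_cast at h0 ⊢; linarith
        rw [h4]; norm_num; nlinarith

/-- leading coefficient of `ℓ_k` -/
noncomputable def ellA (k : ℕ) : ℂ :=
  if k = 1 then (Real.eulerMascheroniConstant : ℂ) else riemannZeta k

lemma ellA_ne_zero (k : ℕ) (hk : 1 ≤ k) : ellA k ≠ 0 := by
  unfold ellA
  split_ifs with h
  · simp only [ne_eq, Complex.ofReal_eq_zero]
    have := Real.one_half_lt_eulerMascheroniConstant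
    intro h'; rw [h'] at this; norm_num at this
  · refine riemannZeta_ne_zero_of_one_lt_re ?_
    rw [Complex.natCast_re]
    exact_mod_cast lt_of_lt_of_le one_lt_two (by omega)

lemma norm_term_aux (m : ℕ) (hm : 2 ≤ m) (w d : ℂ) (hd : 1 ≤ ‖d‖) :
    ‖(riemannZeta m) * w / d‖ ≤ 2 * ‖w‖ := by
  rw [norm_div, norm_mul]
  calc ‖riemannZeta m‖ * ‖w‖ / ‖d‖ ≤ ‖riemannZeta m‖ * ‖w‖ / 1 :=
        div_le_div_of_nonneg_left ?_ one_pos hd |>.trans_eq (by ring)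
    _ = ‖riemannZeta m‖ * ‖w‖ := by ring
    _ ≤ 2 * ‖w‖ := mul_le_mul_of_nonneg_right (zeta_nat_norm_le m hm) (norm_nonneg _)
  · positivity

lemma norm_nat_add_one (n : ℕ) : ‖(n : ℂ) + 1‖ = (n : ℝ) + 1 := by
  rw [show ((n : ℂ) + 1) = ((n + 1 : ℕ) : ℂ) by push_cast; ring, Complex.norm_natCast]
  push_cast; ring

lemma norm_tsum_le_geo {f : ℕ → ℂ} {c r : ℝ} (hr0 : 0 ≤ r) (hr : r ≤ 1/2) (hc : 0 ≤ c)
    (h : ∀ n, ‖f n‖ ≤ c * r ^ n) : ‖∑' n, f n‖ ≤ 2 * c := by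
  have hr1 : r < 1 := lt_of_le_of_lt hr (by norm_num)
  have hg : Summable (fun n : ℕ => c * r ^ n) := (summable_geometric_of_lt_one hr0 hr1).mul_left c
  have hs : Summable (fun n => ‖f n‖) := hg.of_nonneg_of_le (fun n => norm_nonneg _) h
  calc ‖∑' n, f n‖ ≤ ∑' n, ‖f n‖ := norm_tsum_le_tsum_norm hs
    _ ≤ ∑' n : ℕ, c * r ^ n := Summable.tsum_le_tsum h hs hg
    _ = c * (1 - r)⁻¹ := by rw [tsum_mul_left, tsum_geometric_of_lt_one hr0 hr1]
    _ ≤ c * 2 := by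
        refine mul_le_mul_of_nonneg_left ?_ hc
        rw [inv_le_comm₀ (by linarith) (by norm_num)]
        linarith
    _ = 2 * c := by ring

lemma ell_estimate (k : ℕ) (hk : 1 ≤ k) (t : ℝ) (ht0 : 0 < t) (ht : t ≤ 1/2) :
    ‖ell k (t : ℂ) - ellA k * (t : ℂ) ^ k‖ ≤ 4 * t ^ (k + 1) := by
  have htn : ‖(t : ℂ)‖ = t := by rw [Complex.norm_real, Real.norm_eq_abs, abs_of_pos ht0]
  have ht1 : t ≤ 1 := ht.trans (by norm_num)
  rcases eq_or_lt_of_le hk with h1 | h2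
  · -- k = 1
    have hk1 : k = 1 := h1.symm
    subst hk1
    rw [ell, ellA, if_pos rfl, if_pos rfl, pow_one]
    rw [show (Real.eulerMascheroniConstant : ℂ) * (t:ℂ)
        - (∑' n : ℕ, riemannZeta ((n : ℂ) + 2) * (-(t:ℂ)) ^ (n + 2) / ((n : ℂ) + 2))
        - (Real.eulerMascheroniConstant : ℂ) * (t:ℂ)
        = -(∑' n : ℕ, riemannZeta ((n : ℂ) + 2) * (-(t:ℂ)) ^ (n + 2) / ((n : ℂ) + 2)) by ring]
    rw [norm_neg]
    have := norm_tsum_le_geo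
      (f := fun n : ℕ => riemannZeta ((n : ℂ) + 2) * (-(t:ℂ)) ^ (n + 2) / ((n : ℂ) + 2))
      (c := 2 * t ^ 2) (r := t) ht0.le ht (by positivity) ?_
    · calc _ ≤ 2 * (2 * t ^ 2) := this
        _ = 4 * t ^ 2 := by ring
    · intro n
      have hcast : ((n : ℂ) + 2) = ((n + 2 : ℕ) : ℂ) := by push_cast; ring
      have hd : 1 ≤ ‖((n + 2 : ℕ) : ℂ)‖ := by
        rw [Complex.norm_natCast]; exact_mod_cast Nat.le_add_left 1 (n+1)
      calc ‖riemannZeta ((n : ℂ) + 2) * (-(t:ℂ)) ^ (n + 2) / ((n : ℂ) + 2)‖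
          ≤ 2 * ‖(-(t:ℂ)) ^ (n + 2)‖ := by
            rw [hcast]; exact norm_term_aux (n + 2) (by omega) _ _ hd
        _ = 2 * t ^ (n + 2) := by rw [norm_pow, norm_neg, htn]
        _ = 2 * t ^ 2 * t ^ n := by ring
  · -- 2 ≤ k
    have hne : k ≠ 1 := by omega
    set g : ℕ → ℂ :=
      fun n => riemannZeta ((k : ℂ) * ((n : ℂ) + 1)) * (-(t:ℂ) ^ k) ^ (n + 1) / ((n : ℂ) + 1)
      with hg
    have hbound : ∀ n, ‖g n‖ ≤ 2 * t ^ (k * (n + 1)) := by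
      intro n
      have hcast : ((k : ℂ) * ((n : ℂ) + 1)) = ((k * (n + 1) : ℕ) : ℂ) := by push_cast; ring
      have hd : 1 ≤ ‖(n : ℂ) + 1‖ := by
        rw [norm_nat_add_one]; linarith [Nat.cast_nonneg (α := ℝ) n]
      calc ‖g n‖ ≤ 2 * ‖(-(t:ℂ) ^ k) ^ (n + 1)‖ := by
            rw [hg]; simp only []; rw [hcast]
            exact norm_term_aux (k * (n + 1)) (by nlinarith) _ _ hd
        _ = 2 * t ^ (k * (n + 1)) := by
            rw [norm_pow, norm_neg, norm_pow, htn, ← pow_mul]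
    have hsumg : Summable g := by
      refine Summable.of_norm (((summable_geometric_of_lt_one (by positivity : (0:ℝ) ≤ t ^ k)
        (by
          calc t ^ k ≤ t ^ 1 := pow_le_pow_of_le_one ht0.le ht1 hk
            _ = t := pow_one t
            _ < 1 := lt_of_le_of_lt ht (by norm_num))).mul_left (2 * t ^ k)).of_nonneg_of_le
        (fun n => norm_nonneg _) ?_)
      intro n
      calc ‖g n‖ ≤ 2 * t ^ (k * (n + 1)) := hbound n
        _ = 2 * t ^ k * (t ^ k) ^ n := by
            rw [← pow_mul, mul_assoc, ← pow_add, Nat.mul_add, Nat.mul_one, Nat.add_comm]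
    rw [ell, ellA, if_neg hne, if_neg hne]
    rw [Summable.tsum_eq_zero_add hsumg]
    have hg0 : g 0 = - (riemannZeta k * (t:ℂ) ^ k) := by
      rw [hg]; simp only []; push_cast; simp [pow_one]
    rw [hg0]
    rw [show -((-(riemannZeta k * (t:ℂ)^k)) + ∑' n, g (n+1)) - riemannZeta k * (t:ℂ)^k
        = -(∑' n, g (n+1)) by ring]
    rw [norm_neg]
    have htk : t ^ k ≤ 1 / 2 := by
      calc t ^ k ≤ t ^ 1 := pow_le_pow_of_le_one ht0.le ht1 hk
        _ = t := pow_one t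
        _ ≤ 1/2 := ht
    have := norm_tsum_le_geo (f := fun n => g (n + 1)) (c := 2 * t ^ (2 * k)) (r := t ^ k)
      (by positivity) htk (by positivity) ?_
    · calc ‖∑' n, g (n+1)‖ ≤ 2 * (2 * t ^ (2 * k)) := this
        _ = 4 * t ^ (2 * k) := by ring
        _ ≤ 4 * t ^ (k + 1) := by
            have : t ^ (2 * k) ≤ t ^ (k + 1) := pow_le_pow_of_le_one ht0.le ht1 (by omega)
            linarith
    · intro n
      calc ‖g (n + 1)‖ ≤ 2 * t ^ (k * (n + 2)) := hbound (n + 1)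
        _ = 2 * t ^ (2 * k) * (t ^ k) ^ n := by
            rw [← pow_mul, mul_assoc, ← pow_add]
            congr 2; ring

lemma indep_key {f : ℕ → ℝ → ℂ} {a : ℕ → ℂ} (ha : ∀ k, a k ≠ 0)
    (hf : ∀ k, Tendsto (fun t : ℝ => f k t / (t:ℂ)^(k+1)) (𝓝[>] (0:ℝ)) (𝓝 (a k))) :
    ∀ s : Finset ℕ, ∀ g : ℕ → ℂ,
      (∀ t : ℝ, t ∈ Set.Ioo (0:ℝ) 1 → ∑ i ∈ s, g i * f i t = 0) → ∀ i ∈ s, g i = 0 := by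
  intro s
  induction s using Finset.strongInductionOn with
  | _ s ih =>
    intro g hrel i hi
    have hne : s.Nonempty := ⟨i, hi⟩
    set m := s.min' hne with hm
    have hgm : g m = 0 := by
      have hlim : Tendsto (fun t : ℝ => ∑ j ∈ s, g j * f j t / (t:ℂ)^(m+1)) (𝓝[>] (0:ℝ))
          (𝓝 (∑ j ∈ s, if j = m then g m * a m else 0)) := by
        refine tendsto_finset_sum _ fun j hj => ?_
        rcases eq_or_ne j m with rfl | hjm
        · simp only [if_pos rfl]
          exact ((hf m).const_mul (g m)).congr (fun t => (mul_div_assoc _ _ _).symm)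
        · have hmj : m < j := lt_of_le_of_ne (s.min'_le j hj) (Ne.symm hjm)
          rw [if_neg hjm]
          have h0 : Tendsto (fun t:ℝ => (t:ℂ)^(j-m)) (𝓝[>] (0:ℝ)) (𝓝 0) := by
            have hc : Continuous fun t:ℝ => (t:ℂ)^(j-m) := by continuity
            have h2 := hc.tendsto 0
            simp only [Complex.ofReal_zero, zero_pow (by omega : j - m ≠ 0)] at h2
            exact h2.mono_left nhdsWithin_le_nhds
          have hzero := ((hf j).mul h0).const_mul (g j)
          rw [mul_zero, mul_zero] at hzero
          refine hzero.congr' (eventually_nhdsWithin_of_forall ?_)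
          intro t ht
          have htne : (t:ℂ) ≠ 0 := by
            simp only [ne_eq, Complex.ofReal_eq_zero]; exact ne_of_gt ht
          have hpow : (t:ℂ)^(j+1) = (t:ℂ)^(m+1) * (t:ℂ)^(j-m) := by
            rw [← pow_add]; congr 1; omega
          field_simp [hpow]
          rw [hpow]; ring
      have heq : ∀ᶠ t : ℝ in 𝓝[>] (0:ℝ), (∑ j ∈ s, g j * f j t / (t:ℂ)^(m+1)) = (0:ℂ) := by
        filter_upwards [Ioo_mem_nhdsGT_of_mem (by norm_num : (0:ℝ) ∈ Set.Ico (0:ℝ) 1)] with t ht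
        rw [← Finset.sum_div, hrel t ht, zero_div]
      have hL : (∑ j ∈ s, if j = m then g m * a m else 0) = 0 :=
        tendsto_nhds_unique (hlim.congr' heq) tendsto_const_nhds
      rw [Finset.sum_ite_eq' s m (fun _ => g m * a m), if_pos (s.min'_mem hne)] at hL
      exact (mul_eq_zero.1 hL).resolve_right (ha m)
    rcases eq_or_ne i m with rfl | him
    · exact hgm
    · have hi' : i ∈ s.erase m := Finset.mem_erase.2 ⟨him, hi⟩
      refine ih (s.erase m) (Finset.erase_ssubset (s.min'_mem hne)) g ?_ i hi'
      intro t ht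
      have h := hrel t ht
      rwa [← Finset.add_sum_erase s _ (s.min'_mem hne), hgm, zero_mul, zero_add] at h

lemma ell_tendsto (k : ℕ) (hk : 1 ≤ k) :
    Tendsto (fun t : ℝ => ell k (t:ℂ) / (t:ℂ)^k) (𝓝[>] (0:ℝ)) (𝓝 (ellA k)) := by
  have hdiff : Tendsto (fun t : ℝ => ell k (t:ℂ) / (t:ℂ)^k - ellA k) (𝓝[>] (0:ℝ)) (𝓝 0) := by
    apply squeeze_zero_norm' (a := fun t : ℝ => 4 * t)
    · filter_upwards [Ioc_mem_nhdsGT_of_mem (by norm_num : (0:ℝ) ∈ Set.Ico (0:ℝ) (1/2))]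
        with t ht
      obtain ⟨ht0, ht2⟩ := ht
      have htne : (t:ℂ) ≠ 0 := by
        simp only [ne_eq, Complex.ofReal_eq_zero]; exact ne_of_gt ht0
      have heq : ell k (t:ℂ) / (t:ℂ)^k - ellA k = (ell k (t:ℂ) - ellA k * (t:ℂ)^k) / (t:ℂ)^k := by
        field_simp
      rw [heq, norm_div, norm_pow]
      rw [show ‖(t:ℂ)‖ = t by rw [Complex.norm_real, Real.norm_eq_abs, abs_of_pos ht0]]
      rw [div_le_iff₀ (by positivity)]
      calc ‖ell k (t:ℂ) - ellA k * (t:ℂ)^k‖ ≤ 4 * t ^ (k+1) := ell_estimate k hk t ht0 ht2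
        _ = 4 * t * t ^ k := by ring
    · have h5 : Tendsto (fun t : ℝ => 4 * t) (𝓝 (0:ℝ)) (𝓝 (4 * 0)) :=
        (continuous_const.mul continuous_id).tendsto 0
      rw [mul_zero] at h5
      exact h5.mono_left nhdsWithin_le_nhds
  have h6 := hdiff.add_const (ellA k)
  rw [zero_add] at h6
  exact h6.congr (fun t => by ring)

lemma ell_to_zero (k : ℕ) (hk : 1 ≤ k) :
    Tendsto (fun t : ℝ => ell k (t:ℂ)) (𝓝[>] (0:ℝ)) (𝓝 0) := by
  have hpow : Tendsto (fun t:ℝ => (t:ℂ)^k) (𝓝[>] (0:ℝ)) (𝓝 0) := by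
    have hc : Continuous fun t:ℝ => (t:ℂ)^k := by continuity
    have h2 := hc.tendsto 0
    simp only [Complex.ofReal_zero, zero_pow (by omega : k ≠ 0)] at h2
    exact h2.mono_left nhdsWithin_le_nhds
  have h3 := (ell_tendsto k hk).mul hpow
  rw [mul_zero] at h3
  refine h3.congr' (eventually_nhdsWithin_of_forall fun t ht => ?_)
  have htne : (t:ℂ) ≠ 0 := by
    simp only [ne_eq, Complex.ofReal_eq_zero]; exact ne_of_gt ht
  field_simp

lemma exp_ell_tendsto (k : ℕ) (hk : 1 ≤ k) :
    Tendsto (fun t : ℝ => (Complex.exp (ell k (t:ℂ)) - 1) / (t:ℂ)^k) (𝓝[>] (0:ℝ))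
      (𝓝 (ellA k)) := by
  have hne : ∀ᶠ t : ℝ in 𝓝[>] (0:ℝ), ell k (t:ℂ) ≠ 0 := by
    have h0 : ({0}ᶜ : Set ℂ) ∈ 𝓝 (ellA k) := isOpen_compl_singleton.mem_nhds (ellA_ne_zero k hk)
    filter_upwards [(ell_tendsto k hk).eventually_mem h0,
      eventually_mem_nhdsWithin] with t h1 h2
    intro h'
    apply h1
    simp [h', zero_div]
  have hE : Tendsto (fun w : ℂ => (Complex.exp w - 1) / w) (𝓝[≠] (0:ℂ)) (𝓝 1) := by
    have h7 := hasDerivAt_iff_tendsto_slope.1 (Complex.hasDerivAt_exp 0)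
    rw [Complex.exp_zero] at h7
    refine h7.congr fun w => ?_
    rw [slope_def_field, Complex.exp_zero, sub_zero]
  have hLin : Tendsto (fun t : ℝ => ell k (t:ℂ)) (𝓝[>] (0:ℝ)) (𝓝[≠] (0:ℂ)) := by
    rw [tendsto_nhdsWithin_iff]
    exact ⟨ell_to_zero k hk, hne⟩
  have hcomp : Tendsto (fun t : ℝ => (Complex.exp (ell k (t:ℂ)) - 1) / ell k (t:ℂ))
      (𝓝[>] (0:ℝ)) (𝓝 1) := hE.comp hLin
  have h8 := hcomp.mul (ell_tendsto k hk)
  rw [one_mul] at h8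
  refine h8.congr' ?_
  filter_upwards [hne, eventually_mem_nhdsWithin] with t h1 h2
  have htne : (t:ℂ) ≠ 0 := by
    simp only [ne_eq, Complex.ofReal_eq_zero]; exact ne_of_gt (h2 : (0:ℝ) < t)
  field_simp

lemma ell_zero (k : ℕ) (hk : 1 ≤ k) : ell k 0 = 0 := by
  unfold ell
  split_ifs with h
  · simp
  · have hk0 : k ≠ 0 := by omega
    simp [zero_pow hk0]

lemma mem_ball_of_Ioo {t : ℝ} (ht : t ∈ Set.Ioo (0:ℝ) 1) : (t:ℂ) ∈ Metric.ball (0:ℂ) 1 := by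
  rw [Metric.mem_ball, dist_zero_right, Complex.norm_real, Real.norm_eq_abs, abs_of_pos ht.1]
  exact ht.2

lemma exp_combo (s : Finset ℕ) (g : ℕ → ℂ) (c : ℂ)
    (h : ∀ z : ℂ, z ∈ Metric.ball (0:ℂ) 1 →
      ∑ i ∈ s, g i * Complex.exp (ell (i+1) z) = c) :
    (∀ i ∈ s, g i = 0) ∧ c = 0 := by
  have h0 : ∑ i ∈ s, g i = c := by
    have := h 0 (Metric.mem_ball_self one_pos)
    simpa [ell_zero _ (Nat.le_add_left 1 _), Complex.exp_zero] using this
  have hz : ∀ i ∈ s, g i = 0 := by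
    refine indep_key (f := fun k => fun t : ℝ => Complex.exp (ell (k+1) (t:ℂ)) - 1)
      (a := fun k => ellA (k+1)) (fun k => ellA_ne_zero _ (by omega))
      (fun k => exp_ell_tendsto (k+1) (by omega)) s g ?_
    intro t ht
    have htb := mem_ball_of_Ioo ht
    have h1 := h t htb
    simp only [mul_sub, mul_one, Finset.sum_sub_distrib, h1, h0, sub_self]
  exact ⟨hz, by rw [← h0, Finset.sum_eq_zero hz]⟩

/-- In the complex vector space of functions from the open unit disk to `ℂ`, the
family `(ℓ_r)_{r≥1}` is linearly independent over `ℂ`, and the family consisting of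
the constant function `1` together with `(exp ∘ ℓ_r)_{r≥1}` is linearly independent
over `ℂ`. -/
theorem stmt10 :
    LinearIndependent ℂ
      (fun (n : ℕ) => fun z : Metric.ball (0 : ℂ) 1 => ell (n + 1) (z : ℂ)) ∧
    LinearIndependent ℂ
      (fun (i : Option ℕ) => fun z : Metric.ball (0 : ℂ) 1 =>
        i.elim (1 : ℂ) (fun n => Complex.exp (ell (n + 1) (z : ℂ)))) := by
  constructor
  · rw [linearIndependent_iff']
    intro s g hrel i hi
    refine indep_key (f := fun k => fun t : ℝ => ell (k+1) (t:ℂ)) (a := fun k => ellA (k+1))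
      (fun k => ellA_ne_zero (k+1) (by omega)) (fun k => ell_tendsto (k+1) (by omega)) s g ?_ i hi
    intro t ht
    have := congrFun hrel ⟨(t:ℂ), mem_ball_of_Ioo ht⟩
    simpa [Finset.sum_apply, smul_eq_mul] using this
  · have heq : (fun (i : Option ℕ) => fun z : Metric.ball (0 : ℂ) 1 =>
        i.elim (1 : ℂ) (fun n => Complex.exp (ell (n + 1) (z : ℂ))))
        = (fun o : Option ℕ => Option.casesOn' o
            (fun _ : Metric.ball (0 : ℂ) 1 => (1:ℂ))
            (fun n => fun z : Metric.ball (0 : ℂ) 1 => Complex.exp (ell (n + 1) (z : ℂ)))) := by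
      funext i; cases i <;> rfl
    rw [heq]
    refine linearIndependent_option'.2 ⟨?_, ?_⟩
    · rw [linearIndependent_iff']
      intro s g hrel i hi
      refine (exp_combo s g 0 ?_).1 i hi
      intro z hz
      have := congrFun hrel ⟨z, hz⟩
      simpa [Finset.sum_apply, smul_eq_mul] using this
    · intro hmem
      obtain ⟨cc, hcc⟩ := Finsupp.mem_span_range_iff_exists_finsupp.1 hmem
      have h' : ∀ z : ℂ, z ∈ Metric.ball (0:ℂ) 1 →
          ∑ i ∈ cc.support, cc i * Complex.exp (ell (i+1) z) = 1 := by
        intro z hz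
        have := congrFun hcc ⟨z, hz⟩
        rw [Finsupp.sum] at this
        simpa [Finset.sum_apply, smul_eq_mul] using this
      exact one_ne_zero (exp_combo cc.support cc 1 h').2
end

section
/- Let r ≥ 1 be an integer, let ρ be a complex number with ρ^{2r} = −1, and let ξ be a primitive 2r-th root of unity. Then for every complex number z with |z| < 1, exp(ℓ_{2r}(z)) = exp(ℓ_r(ρ·z)) · exp(ℓ_r(ρ·ξ·z)). -/
open Complex Real

lemma zeta_nat_norm_le_s11 {k : ℕ} (hk : 2 ≤ k) : ‖riemannZeta k‖ ≤ 3 := by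
  have h1 : (1:ℕ) < k := by omega
  rw [zeta_nat_eq_tsum_of_gt_one h1]
  have hnorm : ∀ n : ℕ, ‖1/(n:ℂ)^k‖ = 1/(n:ℝ)^k := by
    intro n
    simp [norm_div, norm_pow]
  have hs2 : Summable (fun n : ℕ => 1/(n:ℝ)^2) := summable_one_div_nat_pow.mpr one_lt_two
  have hle : ∀ n : ℕ, 1/(n:ℝ)^k ≤ 1/(n:ℝ)^2 := by
    intro n
    rcases Nat.eq_zero_or_pos n with h | h
    · subst h
      rw [Nat.cast_zero, zero_pow (two_ne_zero), zero_pow (by omega : k ≠ 0)]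
    · have h1n : (1:ℝ) ≤ (n:ℝ) := by exact_mod_cast h
      apply one_div_le_one_div_of_le (by positivity)
      exact pow_le_pow_right₀ h1n hk
  have hsk : Summable (fun n : ℕ => ‖1/(n:ℂ)^k‖) := by
    simp only [hnorm]
    exact hs2.of_nonneg_of_le (fun n => by positivity) hle
  calc ‖∑' n:ℕ, 1/(n:ℂ)^k‖ ≤ ∑' n:ℕ, ‖1/(n:ℂ)^k‖ := norm_tsum_le_tsum_norm hsk
    _ ≤ ∑' n:ℕ, 1/(n:ℝ)^2 := by
        refine Summable.tsum_le_tsum (fun n => ?_) hsk hs2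
        rw [hnorm]; exact hle n
    _ = π^2/6 := hasSum_zeta_two.tsum_eq
    _ ≤ 3 := by nlinarith [Real.pi_le_four, Real.pi_pos]

lemma summable_aux {w : ℂ} (hw : ‖w‖ < 1) (c d : ℕ → ℂ) (hc : ∀ n, ‖c n‖ ≤ 3)
    (hd : ∀ n, 1 ≤ ‖d n‖) : Summable (fun n : ℕ => c n * w ^ (n+1) / d n) := by
  have hg : Summable (fun n : ℕ => 3*‖w‖*‖w‖^n) :=
    (summable_geometric_of_lt_one (norm_nonneg w) hw).mul_left _
  refine Summable.of_norm_bounded hg fun n => ?_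
  rw [norm_div, norm_mul, norm_pow]
  calc ‖c n‖ * ‖w‖^(n+1) / ‖d n‖ ≤ ‖c n‖ * ‖w‖^(n+1) / 1 := by
        gcongr
        exact hd n
    _ = ‖c n‖ * ‖w‖^(n+1) := by ring
    _ ≤ 3 * ‖w‖^(n+1) := by
        gcongr
        exact hc n
    _ = 3*‖w‖*‖w‖^n := by ring

/-- Let `r ≥ 1`, let `ρ` be a complex number with `ρ^{2r} = −1`, and let `ξ` be a
primitive `2r`-th root of unity. Then for every complex `z` with `|z| < 1`,
`exp(ℓ_{2r}(z)) = exp(ℓ_r(ρ·z)) · exp(ℓ_r(ρ·ξ·z))`. -/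
theorem stmt11 (r : ℕ) (hr : 1 ≤ r) (ρ ξ : ℂ) (hρ : ρ ^ (2 * r) = -1)
    (hξ : IsPrimitiveRoot ξ (2 * r)) (z : ℂ) (hz : ‖z‖ < 1) :
    Complex.exp (ell (2 * r) z) =
      Complex.exp (ell r (ρ * z)) * Complex.exp (ell r (ρ * ξ * z)) := by
  have hr0 : r ≠ 0 := by omega
  have h2r : ¬ (2 * r = 1) := by omega
  have hρpow : ‖ρ‖ ^ (2*r) = 1 := by
    rw [← norm_pow, hρ]; simp
  have hρ1 : ‖ρ‖ = 1 := by
    rcases lt_trichotomy ‖ρ‖ 1 with h | h | h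
    · have := pow_lt_one₀ (norm_nonneg ρ) h (by omega : 2*r ≠ 0)
      rw [hρpow] at this; exact absurd this (lt_irrefl 1)
    · exact h
    · have := one_lt_pow₀ h (by omega : 2*r ≠ 0)
      rw [hρpow] at this; exact absurd this (lt_irrefl 1)
  have haz : ‖ρ * z‖ < 1 := by rw [norm_mul, hρ1, one_mul]; exact hz
  have hξr : ξ ^ r = -1 := by
    have h2 : (ξ^r)^2 = 1 := by
      rw [← pow_mul, mul_comm r 2]; exact hξ.pow_eq_one
    have hne : ξ^r ≠ 1 := hξ.pow_ne_one_of_pos_of_lt (by omega) (by omega)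
    have h3 : (ξ^r - 1) * (ξ^r + 1) = 0 := by linear_combination h2
    rcases mul_eq_zero.mp h3 with h | h
    · exact absurd (sub_eq_zero.mp h) hne
    · linear_combination h
  have e2 : ell (2*r) z = - ∑' n : ℕ, riemannZeta (((2*r:ℕ) : ℂ) * ((n : ℂ) + 1))
      * (-z ^ (2*r)) ^ (n + 1) / ((n : ℂ) + 1) := by
    unfold ell; exact if_neg h2r
  rw [← Complex.exp_add]
  congr 1
  by_cases hr1 : r = 1
  · -- case r = 1
    subst hr1
    have hξ1 : ξ = -1 := by rw [← pow_one ξ]; exact hξr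
    set a : ℂ := ρ * z with ha_def
    have hρz : ρ * ξ * z = -a := by rw [hξ1, ha_def]; ring
    have ha : ‖a‖ < 1 := haz
    have hna : ‖-a‖ < 1 := by rwa [norm_neg]
    have ha2 : -z^(2*1) = a^2 := by
      have h : a^2 = ρ^(2*1) * z^2 := by rw [ha_def]; ring
      rw [h, hρ]; ring
    have e1 : ∀ w : ℂ, ell 1 w = (Real.eulerMascheroniConstant : ℂ) * w
        - ∑' n : ℕ, riemannZeta ((n : ℂ) + 2) * (-w) ^ (n + 2) / ((n : ℂ) + 2) := by
      intro w; unfold ell; exact if_pos rfl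
    rw [hρz, e2, e1 a, e1 (-a)]
    simp only [neg_neg, ha2]
    have hd : ∀ n : ℕ, 1 ≤ ‖((n:ℂ)+2)‖ := by
      intro n
      rw [show ((n:ℂ)+2) = ((n+2 : ℕ) : ℂ) by push_cast; ring, Complex.norm_natCast]
      exact_mod_cast Nat.le_add_left 1 (n+1)
    have hζ : ∀ n : ℕ, ‖riemannZeta ((n:ℂ)+2)‖ ≤ 3 := by
      intro n
      rw [show ((n:ℂ)+2) = ((n+2 : ℕ) : ℂ) by push_cast; ring]
      exact zeta_nat_norm_le_s11 (by omega)
    have hf : Summable (fun n : ℕ => riemannZeta ((n:ℂ)+2) * (-a)^(n+2)/((n:ℂ)+2)) := by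
      refine (summable_aux hna (fun n => riemannZeta ((n:ℂ)+2) * (-a)) (fun n => (n:ℂ)+2)
        (fun n => ?_) hd).congr fun n => ?_
      · rw [norm_mul, norm_neg]
        nlinarith [hζ n, norm_nonneg a, norm_nonneg (riemannZeta ((n:ℂ)+2))]
      · rw [pow_succ]; ring
    have hg : Summable (fun n : ℕ => riemannZeta ((n:ℂ)+2) * a^(n+2)/((n:ℂ)+2)) := by
      refine (summable_aux ha (fun n => riemannZeta ((n:ℂ)+2) * a) (fun n => (n:ℂ)+2)
        (fun n => ?_) hd).congr fun n => ?_
      · rw [norm_mul]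
        nlinarith [hζ n, norm_nonneg a, norm_nonneg (riemannZeta ((n:ℂ)+2))]
      · rw [pow_succ]; ring
    have hinj : Function.Injective (fun m : ℕ => 2*m) := by
      intro x y h
      have h' : 2*x = 2*y := h
      omega
    have hsupp : Function.support (fun n : ℕ =>
        riemannZeta ((n:ℂ)+2) * (-a)^(n+2)/((n:ℂ)+2)
          + riemannZeta ((n:ℂ)+2) * a^(n+2)/((n:ℂ)+2)) ⊆
        Set.range (fun m : ℕ => 2*m) := by
      intro n hn
      rcases Nat.even_or_odd n with he | ho
      · obtain ⟨j, hj⟩ := he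
        exact ⟨j, by show 2*j = n; omega⟩
      · exfalso
        apply hn
        show riemannZeta ((n:ℂ)+2) * (-a)^(n+2)/((n:ℂ)+2)
          + riemannZeta ((n:ℂ)+2) * a^(n+2)/((n:ℂ)+2) = 0
        have hoddn : Odd (n+2) := by
          obtain ⟨j, hj⟩ := ho
          exact ⟨j+1, by omega⟩
        rw [Odd.neg_pow hoddn]
        ring
    have hfg : (∑' n:ℕ, riemannZeta ((n:ℂ)+2)*(-a)^(n+2)/((n:ℂ)+2))
        + (∑' n:ℕ, riemannZeta ((n:ℂ)+2)*a^(n+2)/((n:ℂ)+2))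
        = ∑' m:ℕ, riemannZeta (((2*1:ℕ):ℂ)*((m:ℂ)+1)) * (a^2)^(m+1)/((m:ℂ)+1) := by
      rw [← Summable.tsum_add hf hg, ← hinj.tsum_eq hsupp]
      apply tsum_congr
      intro m
      show riemannZeta (((2*m:ℕ):ℂ)+2) * (-a)^(2*m+2)/(((2*m:ℕ):ℂ)+2)
          + riemannZeta (((2*m:ℕ):ℂ)+2) * a^(2*m+2)/(((2*m:ℕ):ℂ)+2)
        = riemannZeta (((2*1:ℕ):ℂ)*((m:ℂ)+1)) * (a^2)^(m+1)/((m:ℂ)+1)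
      have hm0 : ((m:ℂ)+1) ≠ 0 := Nat.cast_add_one_ne_zero m
      have hzarg : ((2*m:ℕ):ℂ)+2 = ((2*1:ℕ):ℂ)*((m:ℂ)+1) := by push_cast; ring
      have hevenn : Even (2*m+2) := ⟨m+1, by omega⟩
      have heven : (-a)^(2*m+2) = a^(2*m+2) := Even.neg_pow hevenn a
      have hup : (a^2)^(m+1) = a^(2*m+2) := by
        rw [show 2*m+2 = 2*(m+1) by omega, pow_mul]
      rw [hzarg, heven, hup]
      field_simp
      ring
    linear_combination hfg
  · -- case r ≥ 2
    have hr2 : 2 ≤ r := by omega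
    set u : ℂ := (ρ * z) ^ r with hu_def
    have hu : ‖u‖ < 1 := by
      rw [hu_def, norm_pow]
      exact pow_lt_one₀ (norm_nonneg _) haz hr0
    have hnu : ‖-u‖ < 1 := by rwa [norm_neg]
    have hkey : -(ρ * ξ * z) ^ r = u := by
      have h1 : (ρ * ξ * z) ^ r = ξ ^ r * (ρ*z)^r := by
        rw [← mul_pow]; ring_nf
      rw [h1, hξr, hu_def]; ring
    have hu2 : -z ^ (2*r) = u ^ 2 := by
      rw [hu_def, ← pow_mul, mul_comm r 2, mul_pow, hρ]; ring
    have e1 : ∀ w : ℂ, ell r w = - ∑' n : ℕ, riemannZeta ((r : ℂ) * ((n : ℂ) + 1))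
        * (-w ^ r) ^ (n + 1) / ((n : ℂ) + 1) := by
      intro w; unfold ell; exact if_neg hr1
    rw [e2, e1, e1]
    simp only [hkey, hu2]
    have hd : ∀ n : ℕ, 1 ≤ ‖((n:ℂ)+1)‖ := by
      intro n
      rw [show ((n:ℂ)+1) = ((n+1 : ℕ) : ℂ) by push_cast; ring, Complex.norm_natCast]
      exact_mod_cast Nat.le_add_left 1 n
    have hζ : ∀ n : ℕ, ‖riemannZeta ((r:ℂ)*((n:ℂ)+1))‖ ≤ 3 := by
      intro n
      rw [show ((r:ℂ)*((n:ℂ)+1)) = ((r*(n+1) : ℕ) : ℂ) by push_cast; ring]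
      refine zeta_nat_norm_le_s11 ?_
      calc 2 ≤ r := hr2
        _ ≤ r * (n+1) := Nat.le_mul_of_pos_right r (by omega)
    have hf : Summable (fun n : ℕ =>
        riemannZeta ((r:ℂ)*((n:ℂ)+1)) * (-u)^(n+1)/((n:ℂ)+1)) :=
      summable_aux hnu _ _ hζ hd
    have hg : Summable (fun n : ℕ =>
        riemannZeta ((r:ℂ)*((n:ℂ)+1)) * u^(n+1)/((n:ℂ)+1)) :=
      summable_aux hu _ _ hζ hd
    have hinj : Function.Injective (fun m : ℕ => 2*m+1) := by
      intro x y h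
      have h' : 2*x+1 = 2*y+1 := h
      omega
    have hsupp : Function.support (fun n : ℕ =>
        riemannZeta ((r:ℂ)*((n:ℂ)+1)) * (-u)^(n+1)/((n:ℂ)+1)
          + riemannZeta ((r:ℂ)*((n:ℂ)+1)) * u^(n+1)/((n:ℂ)+1)) ⊆
        Set.range (fun m : ℕ => 2*m+1) := by
      intro n hn
      rcases Nat.even_or_odd n with he | ho
      · exfalso
        apply hn
        show riemannZeta ((r:ℂ)*((n:ℂ)+1)) * (-u)^(n+1)/((n:ℂ)+1)
          + riemannZeta ((r:ℂ)*((n:ℂ)+1)) * u^(n+1)/((n:ℂ)+1) = 0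
        have hoddn : Odd (n+1) := by
          obtain ⟨j, hj⟩ := he
          exact ⟨j, by omega⟩
        rw [Odd.neg_pow hoddn]
        ring
      · obtain ⟨j, hj⟩ := ho
        exact ⟨j, by show 2*j+1 = n; omega⟩
    have hfg : (∑' n:ℕ, riemannZeta ((r:ℂ)*((n:ℂ)+1)) * (-u)^(n+1)/((n:ℂ)+1))
        + (∑' n:ℕ, riemannZeta ((r:ℂ)*((n:ℂ)+1)) * u^(n+1)/((n:ℂ)+1))
        = ∑' m:ℕ, riemannZeta (((2*r:ℕ):ℂ)*((m:ℂ)+1)) * (u^2)^(m+1)/((m:ℂ)+1) := by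
      rw [← Summable.tsum_add hf hg, ← hinj.tsum_eq hsupp]
      apply tsum_congr
      intro m
      show riemannZeta ((r:ℂ)*(((2*m+1:ℕ):ℂ)+1)) * (-u)^(2*m+1+1)/(((2*m+1:ℕ):ℂ)+1)
          + riemannZeta ((r:ℂ)*(((2*m+1:ℕ):ℂ)+1)) * u^(2*m+1+1)/(((2*m+1:ℕ):ℂ)+1)
        = riemannZeta (((2*r:ℕ):ℂ)*((m:ℂ)+1)) * (u^2)^(m+1)/((m:ℂ)+1)
      have hm0 : ((m:ℂ)+1) ≠ 0 := Nat.cast_add_one_ne_zero m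
      have hzarg : (r:ℂ)*(((2*m+1:ℕ):ℂ)+1) = ((2*r:ℕ):ℂ)*((m:ℂ)+1) := by push_cast; ring
      have hden : ((2*m+1:ℕ):ℂ)+1 = 2*((m:ℂ)+1) := by push_cast; ring
      have hevenn : Even (2*m+1+1) := ⟨m+1, by omega⟩
      have heven : (-u)^(2*m+1+1) = u^(2*m+1+1) := Even.neg_pow hevenn u
      have hup : (u^2)^(m+1) = u^(2*m+1+1) := by
        rw [show 2*m+1+1 = 2*(m+1) by omega, pow_mul]
      rw [hzarg, heven, hup, hden]
      field_simp
      ring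
    linear_combination hfg
end

section
/- For every complex number z with 0 < |z| < 1, exp(−Σ_{n≥1} ζ(2n)·z^{2n}/n) = sin(π·z)/(π·z), where the series Σ_{n≥1} ζ(2n)·z^{2n}/n converges absolutely for |z| < 1. -/
open Real

section aux

private noncomputable def w12 (z : ℂ) (k : ℕ) : ℂ := z ^ 2 / ((k : ℂ) + 1) ^ 2

private noncomputable def f12 (z : ℂ) (n k : ℕ) : ℂ := (w12 z k) ^ (n + 1) / ((n : ℂ) + 1)

private lemma norm_k12 (k : ℕ) : ‖((k : ℂ) + 1)‖ = (k : ℝ) + 1 := by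
  have : ((k : ℂ) + 1) = ((k + 1 : ℕ) : ℂ) := by push_cast; ring
  rw [this, Complex.norm_natCast]
  push_cast; ring

private lemma one_le_norm_k12 (k : ℕ) : (1 : ℝ) ≤ ‖((k : ℂ) + 1)‖ := by
  rw [norm_k12]
  have : (0 : ℝ) ≤ (k : ℝ) := Nat.cast_nonneg k
  linarith

private lemma norm_w12 (z : ℂ) (k : ℕ) :
    ‖w12 z k‖ = ‖z‖ ^ 2 * (1 / ((k : ℝ) + 1) ^ 2) := by
  rw [w12, norm_div, norm_pow, norm_pow, norm_k12]
  field_simp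

private lemma q12_le_one (k : ℕ) : 1 / ((k : ℝ) + 1) ^ 2 ≤ 1 := by
  have hk : (0 : ℝ) ≤ (k : ℝ) := Nat.cast_nonneg k
  rw [div_le_one (by positivity)]
  nlinarith

private lemma norm_w12_lt {z : ℂ} (hz : ‖z‖ < 1) (k : ℕ) : ‖w12 z k‖ < 1 := by
  rw [norm_w12]
  have h2 := q12_le_one k
  have h3 : (0 : ℝ) < 1 / ((k : ℝ) + 1) ^ 2 := by positivity
  nlinarith [norm_nonneg z]

private lemma one_sub_w12_ne {z : ℂ} (hz : ‖z‖ < 1) (k : ℕ) : 1 - w12 z k ≠ 0 := by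
  intro h
  have h1 : w12 z k = 1 := by linear_combination -h
  have h2 := norm_w12_lt hz k
  rw [h1, norm_one] at h2
  exact lt_irrefl 1 h2

private lemma hasSum_f12 {z : ℂ} (hz : ‖z‖ < 1) (k : ℕ) :
    HasSum (fun n => f12 z n k) (-Complex.log (1 - w12 z k)) := by
  have h := Complex.hasSum_taylorSeries_neg_log (z := w12 z k) (norm_w12_lt hz k)
  have h2 : HasSum (fun n : ℕ => (w12 z k) ^ (n + 1) / (((n + 1 : ℕ)) : ℂ))
      (-Complex.log (1 - w12 z k)) := by
    refine (hasSum_nat_add_iff (f := fun n : ℕ => (w12 z k) ^ n / (n : ℂ)) 1).mpr ?_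
    simpa using h
  have hfe : (fun n : ℕ => f12 z n k) =
      fun n : ℕ => (w12 z k) ^ (n + 1) / (((n + 1 : ℕ)) : ℂ) := by
    funext n
    simp only [f12]
    push_cast
    ring
  rw [hfe]
  exact h2

private lemma norm_f12_le {z : ℂ} (n k : ℕ) :
    ‖f12 z n k‖ ≤ (‖z‖ ^ 2) ^ (n + 1) * (1 / ((k : ℝ) + 1) ^ 2) := by
  have h1 : ‖f12 z n k‖ ≤ ‖w12 z k‖ ^ (n + 1) := by
    rw [f12, norm_div, norm_pow]
    exact div_le_self (pow_nonneg (norm_nonneg _) _) (one_le_norm_k12 n)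
  refine h1.trans ?_
  rw [norm_w12, mul_pow]
  have hb : (0:ℝ) ≤ 1 / ((k : ℝ) + 1) ^ 2 := by positivity
  have hle := pow_le_of_le_one hb (q12_le_one k) (Nat.succ_ne_zero n)
  have hz2 : (0:ℝ) ≤ (‖z‖ ^ 2) ^ (n + 1) := by positivity
  exact mul_le_mul_of_nonneg_left hle hz2

private lemma summable_q12 : Summable fun k : ℕ => 1 / ((k : ℝ) + 1) ^ 2 := by
  have h := Real.summable_one_div_nat_pow.mpr (le_refl 2)
  have := (summable_nat_add_iff 1).mpr h
  refine this.congr fun k => ?_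
  push_cast; ring

private lemma summable_bound12 {z : ℂ} (hz : ‖z‖ < 1) :
    Summable (Function.uncurry fun n k : ℕ =>
      (‖z‖ ^ 2) ^ (n + 1) * (1 / ((k : ℝ) + 1) ^ 2)) := by
  refine (summable_prod_of_nonneg ?_).mpr ⟨?_, ?_⟩
  · intro p
    simp only [Function.uncurry]
    positivity
  · intro n
    simp only [Function.uncurry]
    exact summable_q12.mul_left _
  · simp only [Function.uncurry]
    have hr : ‖z‖ ^ 2 < 1 := by nlinarith [norm_nonneg z]
    have hr0 : (0:ℝ) ≤ ‖z‖ ^ 2 := by positivity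
    have hgeo : Summable fun n : ℕ => (‖z‖ ^ 2) ^ (n + 1) := by
      simp_rw [pow_succ]
      exact (summable_geometric_of_lt_one hr0 hr).mul_right _
    refine ((hgeo.mul_right (∑' k : ℕ, 1 / ((k : ℝ) + 1) ^ 2)).congr fun n => ?_)
    rw [tsum_mul_left]

private lemma summable_norm_f12 {z : ℂ} (hz : ‖z‖ < 1) :
    Summable (Function.uncurry fun n k : ℕ => ‖f12 z n k‖) :=
  (summable_bound12 hz).of_nonneg_of_le (fun p => norm_nonneg _)
    (fun p => norm_f12_le p.1 p.2)

private lemma summable_f12 {z : ℂ} (hz : ‖z‖ < 1) :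
    Summable (Function.uncurry fun n k : ℕ => f12 z n k) :=
  Summable.of_norm (summable_norm_f12 hz)

private lemma term_eq12 {z : ℂ} (n : ℕ) :
    riemannZeta (2 * ((n : ℂ) + 1)) * z ^ (2 * (n + 1)) / ((n : ℂ) + 1) =
      ∑' k : ℕ, f12 z n k := by
  have hcast : (2 * ((n : ℂ) + 1)) = ((2 * (n + 1) : ℕ) : ℂ) := by push_cast; ring
  have hre : 1 < (2 * ((n : ℂ) + 1)).re := by
    rw [hcast, Complex.natCast_re]
    exact_mod_cast Nat.lt_of_lt_of_le Nat.one_lt_two (by nlinarith [Nat.zero_le n])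
  rw [zeta_eq_tsum_one_div_nat_add_one_cpow hre]
  rw [← tsum_mul_right, ← tsum_div_const]
  refine tsum_congr fun k => ?_
  rw [hcast, Complex.cpow_natCast]
  simp only [f12, w12]
  rw [div_pow, ← pow_mul, ← pow_mul]
  ring

end aux

/-- For every complex `z` with `0 < |z| < 1`,
`exp(−Σ_{n≥1} ζ(2n)·z^{2n}/n) = sin(π·z)/(π·z)`, the series converging absolutely
for `|z| < 1`. -/
theorem stmt12 (z : ℂ) (hz0 : z ≠ 0) (hz : ‖z‖ < 1) :
    Summable (fun n : ℕ =>
      ‖riemannZeta (2 * ((n : ℂ) + 1)) * z ^ (2 * (n + 1)) / ((n : ℂ) + 1)‖) ∧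
    Complex.exp (-∑' n : ℕ,
        riemannZeta (2 * ((n : ℂ) + 1)) * z ^ (2 * (n + 1)) / ((n : ℂ) + 1)) =
      Complex.sin ((π : ℂ) * z) / ((π : ℂ) * z) := by
  have hG := summable_norm_f12 (z := z) hz
  have hF := summable_f12 (z := z) hz
  constructor
  · refine hG.prod.of_nonneg_of_le (fun n => norm_nonneg _) (fun n => ?_)
    rw [term_eq12]
    exact norm_tsum_le_tsum_norm (hG.prod_factor n)
  · have hsum_eq : (∑' n : ℕ,
        riemannZeta (2 * ((n : ℂ) + 1)) * z ^ (2 * (n + 1)) / ((n : ℂ) + 1)) =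
        -∑' k : ℕ, Complex.log (1 - w12 z k) := by
      rw [tsum_congr (fun n => term_eq12 (z := z) n)]
      rw [← Summable.tsum_comm (f := fun n k => f12 z n k) hF]
      rw [← tsum_neg]
      exact tsum_congr fun k => (hasSum_f12 hz k).tsum_eq
    rw [hsum_eq, neg_neg]
    have hcol : Summable fun k : ℕ => ∑' n : ℕ, f12 z n k := by
      have h := hF.prod_symm.prod
      exact h.congr fun k => rfl
    have hlogsum : Summable fun k : ℕ => Complex.log (1 - w12 z k) := by
      refine (hcol.neg.congr fun k => ?_)
      rw [(hasSum_f12 hz k).tsum_eq, neg_neg]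
    have hp : HasProd (fun k : ℕ => 1 - w12 z k)
        (Complex.exp (∑' k : ℕ, Complex.log (1 - w12 z k))) := by
      have h := hlogsum.hasSum.cexp
      have heq : (Complex.exp ∘ fun k : ℕ => Complex.log (1 - w12 z k)) =
          fun k : ℕ => 1 - w12 z k :=
        funext fun k => Complex.exp_log (one_sub_w12_ne hz k)
      rwa [heq] at h
    have t1 := (hp.tendsto_prod_nat).const_mul ((π : ℂ) * z)
    have t2' : Filter.Tendsto
        (fun N : ℕ => (π : ℂ) * z * ∏ k ∈ Finset.range N, (1 - w12 z k))
        Filter.atTop (nhds (Complex.sin ((π : ℂ) * z))) :=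
      Complex.tendsto_euler_sin_prod z
    have huniq := tendsto_nhds_unique t1 t2'
    have hπz : ((π : ℂ) * z) ≠ 0 :=
      mul_ne_zero (Complex.ofReal_ne_zero.mpr Real.pi_ne_zero) hz0
    rw [eq_div_iff hπz]
    linear_combination huniq
end

section
/- For every integer k ≥ 1, the multiple zeta value ζ(2,2,…,2) with k repetitions of the index 2 satisfies ζ({2}^k) = π^{2k}/(2k+1)!; that is, Σ_{n₁>n₂>…>n_k≥1} 1/(n₁²·n₂²⋯n_k²) = π^{2k}/(2k+1)!. -/
open Filter Topology Finset Real

namespace MZVAux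



lemma sinh_prod (x : ℝ) (hx : 0 < x) :
    Filter.Tendsto (fun N => ∏ j ∈ Finset.range N, (1 + x^2/((j:ℝ)+1)^2)) atTop
      (𝓝 (Real.sinh (π*x)/(π*x))) := by
  have h := Complex.tendsto_euler_sin_prod (x * Complex.I)
  have hIi : ((π:ℂ) * ((x:ℂ) * Complex.I)) = (((π*x):ℝ):ℂ) * Complex.I := by push_cast; ring
  have hne : (π : ℂ) * ((x:ℂ) * Complex.I) ≠ 0 := by
    rw [hIi]
    simp [Real.pi_ne_zero, Complex.I_ne_zero, hx.ne']
  have h2 := h.div_const ((π : ℂ) * ((x:ℂ) * Complex.I))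
  have hprod : ∀ n : ℕ, (∏ j ∈ Finset.range n, ((1:ℂ) - ((x:ℂ)*Complex.I)^2/((j:ℂ)+1)^2))
      = ((∏ j ∈ Finset.range n, (1 + x^2/((j:ℝ)+1)^2) : ℝ) : ℂ) := by
    intro n
    push_cast
    refine Finset.prod_congr rfl fun j _ => ?_
    rw [mul_pow, Complex.I_sq]
    ring
  have h3 : Filter.Tendsto (fun n : ℕ => ((∏ j ∈ Finset.range n, (1 + x^2/((j:ℝ)+1)^2) : ℝ) : ℂ))
      atTop (𝓝 (Complex.sin (π * ((x:ℂ) * Complex.I)) / ((π : ℂ) * ((x:ℂ) * Complex.I)))) := by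
    refine h2.congr fun n => ?_
    rw [mul_comm, mul_div_assoc, div_self hne, mul_one, hprod]
  have hsin : Complex.sin (π * ((x:ℂ) * Complex.I)) / ((π:ℂ) * ((x:ℂ) * Complex.I))
      = ((Real.sinh (π*x) / (π*x) : ℝ) : ℂ) := by
    rw [hIi, Complex.sin_mul_I, ← Complex.ofReal_sinh,
      mul_div_mul_right _ _ Complex.I_ne_zero, Complex.ofReal_div]
  rw [hsin] at h3
  have h4 := (Complex.continuous_re.tendsto _).comp h3
  simp only [Function.comp, Complex.ofReal_re] at h4
  exact h4



lemma prod_eq_sum (x : ℝ) (N : ℕ) :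
    ∏ j ∈ Finset.range N, (1 + x^2/((j:ℝ)+1)^2)
      = ∑ s ∈ (Finset.range (N+1)).powerset, ∏ n ∈ s, x^2/(n:ℝ)^2 := by
  have h := Finset.prod_add (fun n : ℕ => x^2/(n:ℝ)^2) (fun _ => (1:ℝ)) (Finset.range (N+1))
  simp only [Finset.prod_const_one, mul_one] at h
  rw [← h, Finset.prod_range_succ']
  norm_num
  exact Finset.prod_congr rfl fun j _ => by push_cast; ring

lemma hasSum_sinh (y : ℝ) :
    HasSum (fun k : ℕ => y^(2*k+1)/(Nat.factorial (2*k+1) : ℝ)) (Real.sinh y) := by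
  have h := Complex.hasSum_sin' ((y:ℂ) * Complex.I)
  have h2 := h.mul_right Complex.I
  have hterm : ∀ k : ℕ, ((y:ℂ) * Complex.I * Complex.I) ^ (2*k+1) / ((Nat.factorial (2*k+1) : ℂ)) / Complex.I * Complex.I
      = -(((y^(2*k+1)/(Nat.factorial (2*k+1) : ℝ) : ℝ)) : ℂ) := by
    intro k
    rw [div_mul_cancel₀ _ Complex.I_ne_zero, mul_assoc, Complex.I_mul_I]
    push_cast
    rw [mul_neg_one, neg_pow, pow_succ, pow_mul]
    norm_num
    ring
  have hsin : Complex.sin ((y:ℂ) * Complex.I) * Complex.I = -((Real.sinh y : ℝ) : ℂ) := by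
    rw [Complex.sin_mul_I, ← Complex.ofReal_sinh, mul_assoc, Complex.I_mul_I]
    ring
  rw [hsin] at h2
  have h3 := ((HasSum.congr_fun h2 (fun k => (hterm k).symm) : _)).neg
  simp only [neg_neg] at h3
  exact_mod_cast h3



lemma hasSum_w (x : ℝ) (hx : 0 < x) :
    HasSum (fun s : Finset ℕ => ∏ n ∈ s, x^2/(n:ℝ)^2) (Real.sinh (π*x)/(π*x)) := by
  set w : Finset ℕ → ℝ := fun s => ∏ n ∈ s, x^2/(n:ℝ)^2 with hw
  have hnn : ∀ s, 0 ≤ w s := fun s => Finset.prod_nonneg fun n _ => by positivity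
  set P : ℕ → ℝ := fun N => ∑ s ∈ (Finset.range (N+1)).powerset, w s with hP
  have hPl : Filter.Tendsto P atTop (𝓝 (Real.sinh (π*x)/(π*x))) := by
    refine (sinh_prod x hx).congr fun N => (prod_eq_sum x N)
  have hPmono : Monotone P := by
    intro M N hMN
    exact Finset.sum_le_sum_of_subset_of_nonneg
      (Finset.powerset_mono.2 (Finset.range_subset_range.2 (by omega))) (fun s _ _ => hnn s)
  have hPle : ∀ N, P N ≤ Real.sinh (π*x)/(π*x) := fun N => hPmono.ge_of_tendsto hPl N
  refine hasSum_of_isLUB_of_nonneg _ hnn ⟨?_, ?_⟩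
  · rintro r ⟨A, rfl⟩
    set N : ℕ := A.sup fun s => s.sup id with hN
    have hsub : A ⊆ (Finset.range (N+1)).powerset := by
      intro s hs
      rw [Finset.mem_powerset]
      intro n hn
      rw [Finset.mem_range]
      have : n ≤ s.sup id := Finset.le_sup (f := id) hn
      have : s.sup id ≤ N := Finset.le_sup (f := fun s => s.sup id) hs
      omega
    calc ∑ s ∈ A, w s ≤ P N := Finset.sum_le_sum_of_subset_of_nonneg hsub (fun s _ _ => hnn s)
    _ ≤ _ := hPle N
  · intro r hr
    refine le_of_tendsto hPl (Filter.Eventually.of_forall fun N => hr ⟨_, rfl⟩)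



lemma rev_strictAnti (k : ℕ) : StrictAnti (Fin.rev : Fin k → Fin k) :=
  fun _ _ h => Fin.rev_lt_rev.2 h

lemma hasSum_sigma (x : ℝ) (hx : 0 < x) :
    HasSum (fun p : Σ k : ℕ, {f : Fin k → ℕ // StrictAnti f ∧ ∀ i, 0 < f i} =>
      ∏ i, x^2/((p.2.1 i : ℝ))^2) (Real.sinh (π*x)/(π*x)) := by
  set g : (Σ k : ℕ, {f : Fin k → ℕ // StrictAnti f ∧ ∀ i, 0 < f i}) → Finset ℕ :=
    fun p => Finset.image p.2.1 Finset.univ with hg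
  have hcard : ∀ p : (Σ k : ℕ, {f : Fin k → ℕ // StrictAnti f ∧ ∀ i, 0 < f i}),
      (g p).card = p.1 := by
    rintro ⟨k, f, hf, hpos⟩
    simp only [hg]
    rw [Finset.card_image_of_injective _ hf.injective, Finset.card_univ, Fintype.card_fin]
  have hginj : Function.Injective g := by
    rintro ⟨k, f, hf, hfpos⟩ ⟨l, f', hf', hfpos'⟩ h
    have hkl : k = l := by
      have := hcard ⟨k, f, hf, hfpos⟩
      have := hcard ⟨l, f', hf', hfpos'⟩
      simp_all
    subst hkl
    have hs : (Finset.image f Finset.univ) = Finset.image f' Finset.univ := h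
    have hc : (Finset.image f Finset.univ).card = k := hcard ⟨k, f, hf, hfpos⟩
    have h1 : f ∘ Fin.rev = (Finset.image f Finset.univ).orderEmbOfFin hc :=
      Finset.orderEmbOfFin_unique hc (fun i => by simp [Function.comp])
        (hf.comp (rev_strictAnti k))
    have h2 : f' ∘ Fin.rev = (Finset.image f Finset.univ).orderEmbOfFin hc := by
      refine Finset.orderEmbOfFin_unique hc (fun i => by simp [hs, Function.comp])
        (hf'.comp (rev_strictAnti k))
    have h3 : f = f' := by
      funext i
      have := congrFun (h1.trans h2.symm) i.rev
      simpa [Function.comp, Fin.rev_rev] using this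
    subst h3
    rfl
  have hsupp : ∀ s ∉ Set.range g, (∏ n ∈ s, x^2/(n:ℝ)^2) = 0 := by
    intro s hs
    by_contra hne
    apply hs
    have hpos : ∀ n ∈ s, 0 < n := by
      intro n hn
      rcases Nat.eq_zero_or_pos n with h0 | h0
      · exfalso; apply hne
        refine Finset.prod_eq_zero hn ?_
        subst h0; norm_num
      · exact h0
    set f : Fin s.card → ℕ := fun i => s.orderEmbOfFin rfl i.rev with hf
    have hfa : StrictAnti f := (s.orderEmbOfFin rfl).strictMono.comp_strictAnti (rev_strictAnti _)
    have hfp : ∀ i, 0 < f i := fun i => hpos _ (Finset.orderEmbOfFin_mem s rfl i.rev)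
    refine ⟨⟨s.card, f, hfa, hfp⟩, ?_⟩
    refine Finset.eq_of_subset_of_card_le ?_ ?_
    · intro n hn
      simp only [hg, Finset.mem_image, Finset.mem_univ] at hn
      obtain ⟨i, -, rfl⟩ := hn
      exact Finset.orderEmbOfFin_mem s rfl i.rev
    · rw [Finset.card_image_of_injective _ hfa.injective, Finset.card_univ, Fintype.card_fin]
  have key := (hginj.hasSum_iff hsupp).2 (hasSum_w x hx)
  refine key.congr_fun ?_
  rintro ⟨k, f, hf, hfpos⟩
  simp only [Function.comp, hg]
  rw [Finset.prod_image (fun a _ b _ hab => hf.injective hab)]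



noncomputable def ee (k : ℕ) : ℝ :=
  ∑' n : {f : Fin k → ℕ // StrictAnti f ∧ ∀ i, 0 < f i}, ∏ i, (1:ℝ)/((n.1 i : ℝ))^2

lemma fiber_eq (x : ℝ) (k : ℕ) (f : Fin k → ℕ) :
    ∏ i, x^2/((f i : ℝ))^2 = (x^2)^k * ∏ i, (1:ℝ)/((f i : ℝ))^2 := by
  rw [show (fun i => x^2/((f i : ℝ))^2) = fun i => x^2 * (1/((f i : ℝ))^2) from
    funext fun i => div_eq_mul_one_div _ _]
  rw [Finset.prod_mul_distrib, Finset.prod_const, Finset.card_univ, Fintype.card_fin]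

lemma hasSum_e (x : ℝ) (hx : 0 < x) :
    HasSum (fun k : ℕ => ee k * (x^2)^k) (Real.sinh (π*x)/(π*x)) := by
  have hsig := hasSum_sigma x hx
  have hx2 : (x^2 : ℝ) ≠ 0 := by positivity
  have hfib : ∀ k : ℕ, HasSum (fun f : {f : Fin k → ℕ // StrictAnti f ∧ ∀ i, 0 < f i} =>
      ∏ i, x^2/((f.1 i : ℝ))^2) (ee k * (x^2)^k) := by
    intro k
    have hsummable : Summable (fun f : {f : Fin k → ℕ // StrictAnti f ∧ ∀ i, 0 < f i} =>
        ∏ i, x^2/((f.1 i : ℝ))^2) := hsig.summable.sigma_factor k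
    have heq : (fun f : {f : Fin k → ℕ // StrictAnti f ∧ ∀ i, 0 < f i} =>
        ∏ i, x^2/((f.1 i : ℝ))^2)
        = fun f => (x^2)^k * ∏ i, (1:ℝ)/((f.1 i : ℝ))^2 := by
      funext f; exact fiber_eq x k f.1
    rw [heq] at hsummable ⊢
    have hs2 : Summable (fun f : {f : Fin k → ℕ // StrictAnti f ∧ ∀ i, 0 < f i} =>
        ∏ i, (1:ℝ)/((f.1 i : ℝ))^2) := by
      rwa [summable_mul_left_iff (pow_ne_zero k hx2)] at hsummable
    have := hs2.hasSum.mul_left ((x^2)^k)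
    simpa [ee, mul_comm] using this
  exact hsig.sigma hfib

lemma hasSum_c (x : ℝ) (hx : 0 < x) :
    HasSum (fun k : ℕ => (π^(2*k) / (Nat.factorial (2*k+1) : ℝ)) * (x^2)^k)
      (Real.sinh (π*x)/(π*x)) := by
  have h := (Real.hasSum_sinh (π*x)).div_const (π*x)
  refine h.congr_fun fun k => ?_
  have hpx : (π*x) ≠ 0 := by positivity
  have h1 : (π*x)^(2*k+1)/((Nat.factorial (2*k+1)):ℝ)/(π*x)
      = (π*x)^(2*k)/((Nat.factorial (2*k+1)):ℝ) := by
    rw [pow_succ]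
    field_simp
  rw [h1, mul_pow, pow_mul x, div_mul_eq_mul_div]



section Unique

variable {a b : ℕ → ℝ}

lemma shift_summable {c : ℕ → ℝ} {t : ℝ} (ht : 0 < t)
    (h : Summable (fun k => c k * t^k)) : Summable (fun k => c (k+1) * t^k) := by
  have h1 : Summable (fun k => c (k+1) * t^(k+1)) := (summable_nat_add_iff 1).2 h
  have h2 : (fun k => c (k+1) * t^(k+1)) = fun k => t * (c (k+1) * t^k) := by
    funext k; ring
  rw [h2] at h1
  exact (summable_mul_left_iff ht.ne').1 h1

lemma tsum_split {c : ℕ → ℝ} {t : ℝ} (ht : 0 < t) (h : Summable (fun k => c k * t^k)) :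
    ∑' k, c k * t^k = c 0 + t * ∑' k, c (k+1) * t^k := by
  rw [Summable.tsum_eq_zero_add h]
  have h2 : (fun k => c (k+1) * t^(k+1)) = fun k => t * (c (k+1) * t^k) := by
    funext k; ring
  rw [h2, tsum_mul_left]
  norm_num

lemma head_le {c : ℕ → ℝ} (hc : ∀ k, 0 ≤ c k) {t : ℝ} (ht : 0 < t)
    (h : Summable (fun k => c k * t^k)) : c 0 ≤ ∑' k, c k * t^k := by
  rw [tsum_split ht h]
  have : 0 ≤ ∑' k, c (k+1) * t^k :=
    tsum_nonneg fun k => mul_nonneg (hc _) (by positivity)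
  nlinarith

lemma le_head_add {c : ℕ → ℝ} (hc : ∀ k, 0 ≤ c k) {t : ℝ} (ht : 0 < t) (ht1 : t ≤ 1)
    (h : Summable (fun k => c k * t^k)) (h1 : Summable (fun k => c k * (1:ℝ)^k)) :
    ∑' k, c k * t^k ≤ c 0 + t * ∑' k, c (k+1) := by
  rw [tsum_split ht h]
  have hs := shift_summable ht h
  have hs1 : Summable (fun k => c (k+1)) := by
    have := shift_summable one_pos h1
    simpa using this
  have hle : ∑' k, c (k+1) * t^k ≤ ∑' k, c (k+1) := by
    refine Summable.tsum_le_tsum (fun k => ?_) hs hs1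
    calc c (k+1) * t^k ≤ c (k+1) * 1 := by
          refine mul_le_mul_of_nonneg_left ?_ (hc _)
          exact pow_le_one₀ ht.le ht1
    _ = c (k+1) := mul_one _
  nlinarith

lemma head_eq (ha : ∀ k, 0 ≤ a k) (hb : ∀ k, 0 ≤ b k)
    (h : ∀ t : ℝ, 0 < t → ∃ S, HasSum (fun k => a k * t^k) S ∧ HasSum (fun k => b k * t^k) S) :
    a 0 = b 0 := by
  obtain ⟨S1, hA1, hB1⟩ := h 1 one_pos
  have hCa : Summable (fun k => a k * (1:ℝ)^k) := hA1.summable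
  have hCb : Summable (fun k => b k * (1:ℝ)^k) := hB1.summable
  set Ca := ∑' k, a (k+1)
  set Cb := ∑' k, b (k+1)
  have key : ∀ t : ℝ, 0 < t → t ≤ 1 → a 0 ≤ b 0 + t * Cb ∧ b 0 ≤ a 0 + t * Ca := by
    intro t ht ht1
    obtain ⟨S, hA, hB⟩ := h t ht
    have hFG : ∑' k, a k * t^k = ∑' k, b k * t^k := by
      rw [hA.tsum_eq, hB.tsum_eq]
    constructor
    · calc a 0 ≤ ∑' k, a k * t^k := head_le ha ht hA.summable
      _ = ∑' k, b k * t^k := hFG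
      _ ≤ b 0 + t * Cb := le_head_add hb ht ht1 hB.summable hCb
    · calc b 0 ≤ ∑' k, b k * t^k := head_le hb ht hB.summable
      _ = ∑' k, a k * t^k := hFG.symm
      _ ≤ a 0 + t * Ca := le_head_add ha ht ht1 hA.summable hCa
  have hlim1 : Filter.Tendsto (fun t : ℝ => b 0 + t * Cb) (𝓝[>] 0) (𝓝 (b 0)) := by
    have : Filter.Tendsto (fun t : ℝ => b 0 + t * Cb) (𝓝 0) (𝓝 (b 0 + 0 * Cb)) := by
      exact (continuous_const.add (continuous_id.mul continuous_const)).tendsto 0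
    simpa using this.mono_left nhdsWithin_le_nhds
  have hlim2 : Filter.Tendsto (fun t : ℝ => a 0 + t * Ca) (𝓝[>] 0) (𝓝 (a 0)) := by
    have : Filter.Tendsto (fun t : ℝ => a 0 + t * Ca) (𝓝 0) (𝓝 (a 0 + 0 * Ca)) := by
      exact (continuous_const.add (continuous_id.mul continuous_const)).tendsto 0
    simpa using this.mono_left nhdsWithin_le_nhds
  have hev : ∀ᶠ t in 𝓝[>] (0:ℝ), (0 < t ∧ t ≤ 1) := by
    filter_upwards [Ioc_mem_nhdsGT_of_mem (Set.left_mem_Ico.2 one_pos)] with t ht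
    exact ⟨ht.1, ht.2⟩
  have h1 : a 0 ≤ b 0 := by
    refine ge_of_tendsto hlim1 ?_
    filter_upwards [hev] with t ht
    exact (key t ht.1 ht.2).1
  have h2 : b 0 ≤ a 0 := by
    refine ge_of_tendsto hlim2 ?_
    filter_upwards [hev] with t ht
    exact (key t ht.1 ht.2).2
  linarith

lemma shift_hyp (ha : ∀ k, 0 ≤ a k) (hb : ∀ k, 0 ≤ b k)
    (h : ∀ t : ℝ, 0 < t → ∃ S, HasSum (fun k => a k * t^k) S ∧ HasSum (fun k => b k * t^k) S) :
    ∀ t : ℝ, 0 < t → ∃ S, HasSum (fun k => a (k+1) * t^k) S ∧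
      HasSum (fun k => b (k+1) * t^k) S := by
  intro t ht
  obtain ⟨S, hA, hB⟩ := h t ht
  have hsa := shift_summable ht hA.summable
  have hsb := shift_summable ht hB.summable
  have hFG : ∑' k, a k * t^k = ∑' k, b k * t^k := by rw [hA.tsum_eq, hB.tsum_eq]
  rw [tsum_split ht hA.summable, tsum_split ht hB.summable,
    head_eq ha hb h] at hFG
  have heq : ∑' k, a (k+1) * t^k = ∑' k, b (k+1) * t^k := by
    have := add_left_cancel hFG
    exact mul_left_cancel₀ ht.ne' this
  exact ⟨_, hsa.hasSum, heq ▸ hsb.hasSum⟩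

lemma coeff_unique : ∀ (k : ℕ) (a b : ℕ → ℝ), (∀ j, 0 ≤ a j) → (∀ j, 0 ≤ b j) →
    (∀ t : ℝ, 0 < t → ∃ S, HasSum (fun k => a k * t^k) S ∧ HasSum (fun k => b k * t^k) S) →
    a k = b k := by
  intro k
  induction k with
  | zero => intro a b ha hb h; exact head_eq ha hb h
  | succ k ih =>
    intro a b ha hb h
    exact ih (fun j => a (j+1)) (fun j => b (j+1)) (fun j => ha _) (fun j => hb _)
      (shift_hyp ha hb h)

end Unique

end MZVAux

/-- For every integer `k ≥ 1`, the multiple zeta value `ζ(2,…,2)` (`k` twos),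
i.e. the sum over strictly decreasing `k`-tuples of positive integers
`n₁ > … > n_k ≥ 1` of `1/(n₁²⋯n_k²)`, equals `π^{2k}/(2k+1)!`. -/
theorem stmt14 (k : ℕ) (hk : 1 ≤ k) :
    ∑' n : {f : Fin k → ℕ // StrictAnti f ∧ ∀ i, 0 < f i},
      ∏ i : Fin k, (1 : ℝ) / (n.1 i : ℝ) ^ 2
      = Real.pi ^ (2 * k) / (Nat.factorial (2 * k + 1) : ℝ) := by
  have key := MZVAux.coeff_unique k MZVAux.ee
      (fun k => Real.pi ^ (2*k) / (Nat.factorial (2*k+1) : ℝ))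
      (fun j => tsum_nonneg fun n => Finset.prod_nonneg fun i _ => by positivity)
      (fun j => by positivity)
      ?_
  · exact key
  · intro t ht
    have hx : (0:ℝ) < Real.sqrt t := Real.sqrt_pos.2 ht
    have hx2 : Real.sqrt t ^ 2 = t := Real.sq_sqrt ht.le
    refine ⟨Real.sinh (Real.pi * Real.sqrt t)/(Real.pi * Real.sqrt t), ?_, ?_⟩
    · have := MZVAux.hasSum_e (Real.sqrt t) hx
      rwa [hx2] at this
    · have := MZVAux.hasSum_c (Real.sqrt t) hx
      rwa [hx2] at this
end

section
/- Let s₁,…,s_r be positive integers and let z be a complex number with |z| < 1. Then (1/(1−z))·Li_{s₁,…,s_r}(z) = Σ_{N≥0} H_{s₁,…,s_r}(N)·z^N, where the right-hand series converges absolutely for |z| < 1. -/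
lemma aux_pi_summable (g : ℕ → ℝ) (hg : Summable g) (h0 : ∀ k, 0 ≤ g k) :
    ∀ n : ℕ, Summable (fun f : Fin n → ℕ => ∏ i, g (f i)) := by
  intro n
  induction n with
  | zero =>
    have : (fun f : Fin 0 → ℕ => ∏ i, g (f i)) = fun _ => 1 := by funext f; simp
    rw [this]; exact Summable.of_finite
  | succ n ih =>
    have h := Summable.mul_of_nonneg hg ih h0
      (fun f => Finset.prod_nonneg fun i _ => h0 _)
    refine (Equiv.summable_iff (Fin.consEquiv (fun _ => ℕ))).mp ?_
    refine h.congr ?_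
    rintro ⟨x, f⟩
    simp [Fin.prod_univ_succ, Function.comp]

lemma aux_summable (r : ℕ) (hr : 1 ≤ r) (s : Fin r → ℕ)
    (z : ℂ) (hz : ‖z‖ < 1) :
    Summable (fun f : {f : Fin r → ℕ // StrictAnti f ∧ ∀ i, 0 < f i} =>
      (∏ i : Fin r, (1 : ℝ) / (f.1 i : ℝ) ^ (s i)) * ‖z‖ ^ (f.1 ⟨0, hr⟩)) := by
  set w : ℝ := ‖z‖ ^ ((r : ℝ)⁻¹) with hw_def
  have hrpos : (0 : ℝ) < (r : ℝ)⁻¹ := by positivity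
  have hw0 : 0 ≤ w := Real.rpow_nonneg (norm_nonneg z) _
  have hw1 : w < 1 := Real.rpow_lt_one (norm_nonneg z) hz hrpos
  have hbig : Summable (fun f : Fin r → ℕ => ∏ i, w ^ (f i)) :=
    aux_pi_summable (fun k => w ^ k) (summable_geometric_of_lt_one hw0 hw1)
      (fun k => pow_nonneg hw0 k) r
  have hsub := hbig.subtype {f : Fin r → ℕ | StrictAnti f ∧ ∀ i, 0 < f i}
  refine Summable.of_nonneg_of_le ?_ ?_ hsub
  · intro f
    have := f.2
    positivity
  · rintro ⟨f, hanti, hpos⟩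
    have hle1 : (∏ i : Fin r, (1 : ℝ) / (f i : ℝ) ^ (s i)) ≤ 1 := by
      refine Finset.prod_le_one (fun i _ => by positivity) (fun i _ => ?_)
      rw [div_le_one (by have := hpos i; positivity)]
      exact one_le_pow₀ (by exact_mod_cast hpos i)
    have hprodnn : (0:ℝ) ≤ ∏ i : Fin r, w ^ (f i) :=
      Finset.prod_nonneg fun i _ => pow_nonneg hw0 _
    have hznn : (0:ℝ) ≤ ‖z‖ ^ (f ⟨0, hr⟩) := pow_nonneg (norm_nonneg z) _
    have key : ‖z‖ ^ (f ⟨0, hr⟩) ≤ ∏ i : Fin r, w ^ (f i) := by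
      rcases eq_or_lt_of_le (norm_nonneg z) with h0 | h0
      · have hf0 : 0 < f ⟨0, hr⟩ := hpos _
        rw [← h0]
        rw [zero_pow hf0.ne']
        exact hprodnn
      · have hsum_le : (∑ i : Fin r, f i) ≤ r * f ⟨0, hr⟩ := by
          calc (∑ i : Fin r, f i) ≤ ∑ _i : Fin r, f ⟨0, hr⟩ :=
                Finset.sum_le_sum fun i _ => hanti.antitone (by simp [Fin.le_def])
            _ = r * f ⟨0, hr⟩ := by simp [Finset.sum_const, Finset.card_univ, mul_comm]
        rw [Finset.prod_pow_eq_pow_sum]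
        have : w ^ (∑ i : Fin r, f i) = ‖z‖ ^ ((r:ℝ)⁻¹ * (∑ i : Fin r, f i : ℕ)) := by
          rw [Real.rpow_mul (norm_nonneg z), Real.rpow_natCast, hw_def]
        rw [this]
        have h1 : ‖z‖ ^ (f ⟨0, hr⟩) = ‖z‖ ^ ((f ⟨0, hr⟩ : ℕ) : ℝ) :=
          (Real.rpow_natCast _ _).symm
        rw [h1]
        apply Real.rpow_le_rpow_of_exponent_ge h0 (le_of_lt hz)
        have hr0 : (0:ℝ) < (r:ℝ) := by exact_mod_cast hr
        have hc : ((∑ i : Fin r, f i : ℕ) : ℝ) ≤ (r : ℝ) * (f ⟨0, hr⟩ : ℕ) := by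
          exact_mod_cast hsum_le
        calc ((r:ℝ))⁻¹ * ((∑ i : Fin r, f i : ℕ) : ℝ)
            ≤ (r:ℝ)⁻¹ * ((r : ℝ) * (f ⟨0, hr⟩ : ℕ)) := by
              exact mul_le_mul_of_nonneg_left hc (by positivity)
          _ = ((f ⟨0, hr⟩ : ℕ) : ℝ) := by field_simp
    calc (∏ i : Fin r, (1 : ℝ) / (f i : ℝ) ^ (s i)) * ‖z‖ ^ (f ⟨0, hr⟩)
        ≤ 1 * ‖z‖ ^ (f ⟨0, hr⟩) := mul_le_mul_of_nonneg_right hle1 hznn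
      _ = ‖z‖ ^ (f ⟨0, hr⟩) := one_mul _
      _ ≤ _ := key

def auxEquiv (r : ℕ) (hr : 1 ≤ r) :
    ({f : Fin r → ℕ // StrictAnti f ∧ ∀ i, 0 < f i} × ℕ) ≃
    (Σ N : ℕ, {f : Fin r → ℕ // StrictAnti f ∧ (∀ i, 0 < f i) ∧ f ⟨0, hr⟩ ≤ N}) where
  toFun p := ⟨p.1.1 ⟨0, hr⟩ + p.2, ⟨p.1.1, p.1.2.1, p.1.2.2, Nat.le_add_right _ _⟩⟩
  invFun q := (⟨q.2.1, q.2.2.1, q.2.2.2.1⟩, q.1 - q.2.1 ⟨0, hr⟩)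
  left_inv := by rintro ⟨⟨f, h1, h2⟩, k⟩; simp
  right_inv := by
    rintro ⟨N, f, h1, h2, h3⟩
    have key : ∀ (M N : ℕ), M = N → ∀ (f : Fin r → ℕ)
        (h1 : StrictAnti f ∧ (∀ i, 0 < f i) ∧ f ⟨0, hr⟩ ≤ M)
        (h2 : StrictAnti f ∧ (∀ i, 0 < f i) ∧ f ⟨0, hr⟩ ≤ N),
        (⟨M, ⟨f, h1⟩⟩ : Σ N : ℕ,
            {f : Fin r → ℕ // StrictAnti f ∧ (∀ i, 0 < f i) ∧ f ⟨0, hr⟩ ≤ N})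
          = ⟨N, ⟨f, h2⟩⟩ := by
      rintro M N rfl f h1 h2; rfl
    exact key _ _ (Nat.add_sub_cancel' h3) f _ _

set_option maxHeartbeats 2000000 in
/-- Let `s₁,…,s_r` be positive integers and `z` complex with `|z| < 1`. Then
`(1/(1−z))·Li_{s₁,…,s_r}(z) = Σ_{N≥0} H_{s₁,…,s_r}(N)·z^N`, the right-hand series
converging absolutely for `|z| < 1`. Here
`Li_{s₁,…,s_r}(z) = Σ_{n₁>…>n_r≥1} z^{n₁}/(n₁^{s₁}⋯n_r^{s_r})` and
`H_{s₁,…,s_r}(N) = Σ_{N≥n₁>…>n_r≥1} 1/(n₁^{s₁}⋯n_r^{s_r})`. -/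
theorem stmt19 (r : ℕ) (hr : 1 ≤ r) (s : Fin r → ℕ) (hs : ∀ i, 0 < s i)
    (z : ℂ) (hz : ‖z‖ < 1) :
    Summable (fun N : ℕ =>
      ‖((∑' n : {f : Fin r → ℕ // StrictAnti f ∧ (∀ i, 0 < f i) ∧ f ⟨0, hr⟩ ≤ N},
            ∏ i : Fin r, (1 : ℝ) / (n.1 i : ℝ) ^ (s i) : ℝ) : ℂ) * z ^ N‖) ∧
    (1 / (1 - z)) *
        (∑' n : {f : Fin r → ℕ // StrictAnti f ∧ ∀ i, 0 < f i},
          z ^ (n.1 ⟨0, hr⟩) / ∏ i : Fin r, ((n.1 i : ℂ)) ^ (s i)) =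
      ∑' N : ℕ,
        ((∑' n : {f : Fin r → ℕ // StrictAnti f ∧ (∀ i, 0 < f i) ∧ f ⟨0, hr⟩ ≤ N},
            ∏ i : Fin r, (1 : ℝ) / (n.1 i : ℝ) ^ (s i) : ℝ) : ℂ) * z ^ N := by
  classical
  have ha_nonneg : ∀ f : Fin r → ℕ, 0 ≤ ∏ i : Fin r, (1:ℝ)/(f i:ℝ)^(s i) :=
    fun f => Finset.prod_nonneg fun i _ => by positivity
  have hA := aux_summable r hr s z hz
  set G : ({f : Fin r → ℕ // StrictAnti f ∧ ∀ i, 0 < f i} × ℕ) → ℂ :=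
    fun p => ((∏ i : Fin r, (1:ℝ)/(p.1.1 i:ℝ)^(s i) : ℝ) : ℂ) * z ^ (p.1.1 ⟨0,hr⟩ + p.2)
    with hGdef
  have hGnorm : ∀ p, ‖G p‖ =
      ((∏ i : Fin r, (1:ℝ)/(p.1.1 i:ℝ)^(s i)) * ‖z‖ ^ (p.1.1 ⟨0,hr⟩)) * ‖z‖ ^ p.2 := by
    intro p
    rw [hGdef]
    simp only [norm_mul, Complex.norm_real, norm_pow, pow_add,
      Real.norm_eq_abs, abs_of_nonneg (ha_nonneg _)]
    ring
  have hGn : Summable (fun p => ‖G p‖) := by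
    refine Summable.congr (Summable.mul_of_nonneg hA
      (summable_geometric_of_lt_one (norm_nonneg z) hz)
      (fun f => mul_nonneg (ha_nonneg _) (pow_nonneg (norm_nonneg z) _))
      (fun k => pow_nonneg (norm_nonneg z) _)) ?_
    intro p
    rw [hGnorm]
  have hG : Summable G := Summable.of_norm hGn
  set e := auxEquiv r hr with hedef
  have hDn : Summable (fun q => ‖G (e.symm q)‖) := (Equiv.summable_iff e.symm).mpr hGn
  have hD : Summable (fun q => G (e.symm q)) := (Equiv.summable_iff e.symm).mpr hG
  have hDval : ∀ (q : Σ N : ℕ,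
      {f : Fin r → ℕ // StrictAnti f ∧ (∀ i, 0 < f i) ∧ f ⟨0, hr⟩ ≤ N}),
      G (e.symm q) = ((∏ i : Fin r, (1:ℝ)/(q.2.1 i:ℝ)^(s i) : ℝ) : ℂ) * z ^ q.1 := by
    rintro ⟨N, f, h1, h2, h3⟩
    show ((∏ i : Fin r, (1:ℝ)/(f i:ℝ)^(s i) : ℝ) : ℂ) * z ^ (f ⟨0,hr⟩ + (N - f ⟨0,hr⟩)) = _
    rw [Nat.add_sub_cancel' h3]
  constructor
  · -- summability part
    refine Summable.congr (Summable.sigma hDn) ?_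
    intro N
    have step : ∀ (c : {f : Fin r → ℕ // StrictAnti f ∧ (∀ i, 0 < f i) ∧ f ⟨0, hr⟩ ≤ N}),
        ‖G (e.symm ⟨N, c⟩)‖ = (∏ i : Fin r, (1:ℝ)/(c.1 i:ℝ)^(s i)) * ‖z‖ ^ N := by
      intro c
      rw [hDval ⟨N, c⟩]
      simp only [norm_mul, Complex.norm_real, norm_pow, Real.norm_eq_abs,
        abs_of_nonneg (ha_nonneg _)]
    calc ∑' c, ‖G (e.symm ⟨N, c⟩)‖
        = ∑' (c : {f : Fin r → ℕ // StrictAnti f ∧ (∀ i, 0 < f i) ∧ f ⟨0, hr⟩ ≤ N}),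
            (∏ i : Fin r, (1:ℝ)/(c.1 i:ℝ)^(s i)) * ‖z‖ ^ N := tsum_congr step
      _ = (∑' (c : {f : Fin r → ℕ // StrictAnti f ∧ (∀ i, 0 < f i) ∧ f ⟨0, hr⟩ ≤ N}),
            ∏ i : Fin r, (1:ℝ)/(c.1 i:ℝ)^(s i)) * ‖z‖ ^ N := tsum_mul_right
      _ = ‖((∑' (n : {f : Fin r → ℕ // StrictAnti f ∧ (∀ i, 0 < f i) ∧ f ⟨0, hr⟩ ≤ N}),
            ∏ i : Fin r, (1:ℝ) / (n.1 i : ℝ) ^ (s i) : ℝ) : ℂ) * z ^ N‖ := by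
          rw [norm_mul, Complex.norm_real, norm_pow, Real.norm_eq_abs,
            abs_of_nonneg (tsum_nonneg fun c => ha_nonneg _)]
  · -- main identity
    have hLi : (∑' n : {f : Fin r → ℕ // StrictAnti f ∧ ∀ i, 0 < f i},
          z ^ (n.1 ⟨0, hr⟩) / ∏ i : Fin r, ((n.1 i : ℂ)) ^ (s i)) =
        ∑' n : {f : Fin r → ℕ // StrictAnti f ∧ ∀ i, 0 < f i},
          ((∏ i : Fin r, (1:ℝ)/(n.1 i:ℝ)^(s i) : ℝ) : ℂ) * z ^ (n.1 ⟨0, hr⟩) := by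
      refine tsum_congr fun n => ?_
      push_cast
      rw [Finset.prod_div_distrib]
      simp only [Finset.prod_const_one]
      rw [div_eq_mul_inv, div_eq_mul_inv, one_mul, mul_comm]
    have way1 : ∑' p, G p =
        (∑' n : {f : Fin r → ℕ // StrictAnti f ∧ ∀ i, 0 < f i},
          ((∏ i : Fin r, (1:ℝ)/(n.1 i:ℝ)^(s i) : ℝ) : ℂ) * z ^ (n.1 ⟨0, hr⟩)) * (1 - z)⁻¹ := by
      rw [Summable.tsum_prod hG]
      have inner : ∀ (b : {f : Fin r → ℕ // StrictAnti f ∧ ∀ i, 0 < f i}),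
          ∑' (k : ℕ), G (b, k) =
          (((∏ i : Fin r, (1:ℝ)/(b.1 i:ℝ)^(s i) : ℝ) : ℂ) * z ^ (b.1 ⟨0, hr⟩)) * (1 - z)⁻¹ := by
        intro b
        have : ∀ k : ℕ, G (b, k) =
            (((∏ i : Fin r, (1:ℝ)/(b.1 i:ℝ)^(s i) : ℝ) : ℂ) * z ^ (b.1 ⟨0, hr⟩)) * z ^ k := by
          intro k
          rw [hGdef]
          show _ * z ^ (b.1 ⟨0,hr⟩ + k) = _
          rw [pow_add]; ring
        rw [tsum_congr this, tsum_mul_left, tsum_geometric_of_norm_lt_one hz]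
      rw [tsum_congr inner, tsum_mul_right]
    have way2 : ∑' p, G p =
        ∑' N : ℕ,
          ((∑' (n : {f : Fin r → ℕ // StrictAnti f ∧ (∀ i, 0 < f i) ∧ f ⟨0, hr⟩ ≤ N}),
              ∏ i : Fin r, (1:ℝ) / (n.1 i : ℝ) ^ (s i) : ℝ) : ℂ) * z ^ N := by
      rw [← Equiv.tsum_eq e.symm G]
      rw [Summable.tsum_sigma hD]
      refine tsum_congr fun N => ?_
      calc ∑' c, G (e.symm ⟨N, c⟩)
          = ∑' (c : {f : Fin r → ℕ // StrictAnti f ∧ (∀ i, 0 < f i) ∧ f ⟨0, hr⟩ ≤ N}),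
              ((∏ i : Fin r, (1:ℝ)/(c.1 i:ℝ)^(s i) : ℝ) : ℂ) * z ^ N :=
            tsum_congr fun c => hDval ⟨N, c⟩
        _ = (∑' (c : {f : Fin r → ℕ // StrictAnti f ∧ (∀ i, 0 < f i) ∧ f ⟨0, hr⟩ ≤ N}),
              ((∏ i : Fin r, (1:ℝ)/(c.1 i:ℝ)^(s i) : ℝ) : ℂ)) * z ^ N := tsum_mul_right
        _ = _ := by rw [Complex.ofReal_tsum]
    rw [hLi, one_div, mul_comm, ← way1, way2]
end
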